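/- arXiv:2604.19602 — 7 statements merged into one kernel-verified Lean document; each statement's English description precedes it below -/
import Mathlib

section
/- Let A, B be n×n complex positive semidefinite matrices with r = rank(B) ≥ 1. If B has no zero main diagonal entry and every principal submatrix of A of order n − r + 1 is positive definite, then the Hadamard product A ∘ B is positive definite. -/
open Matrix
open scoped Matrix ComplexOrder

/-- `mu m A` is the smallest of the eigenvalues of all `m × m` principal submatrices of `A`
(principal submatrices are obtained by selecting the same set of `m` row and column indices). -/
noncomputable def mu {n : ℕ} (m : ℕ) (A : Matrix (Fin n) (Fin n) ℂ) : ℝ :=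
  sInf {t : ℝ | ∃ f : Fin m → Fin n, Function.Injective f ∧
    ∃ h : (A.submatrix f f).IsHermitian, ∃ i : Fin m, t = h.eigenvalues i}

/-- The smallest eigenvalue of a Hermitian matrix. -/
noncomputable def lambdaMin {n : ℕ} {A : Matrix (Fin n) (Fin n) ℂ} (hA : A.IsHermitian) : ℝ :=
  ⨅ i, hA.eigenvalues i

/-- The largest eigenvalue of a Hermitian matrix. -/
noncomputable def lambdaMax {n : ℕ} {A : Matrix (Fin n) (Fin n) ℂ} (hA : A.IsHermitian) : ℝ :=
  ⨆ i, hA.eigenvalues i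

/-- The smallest positive eigenvalue of a Hermitian matrix. -/
noncomputable def lambdaMinPos {n : ℕ} {A : Matrix (Fin n) (Fin n) ℂ} (hA : A.IsHermitian) : ℝ :=
  sInf {t : ℝ | (∃ i, hA.eigenvalues i = t) ∧ 0 < t}

/-- The effective condition number of a positive semidefinite matrix: the ratio of its largest
and smallest positive eigenvalues. -/
noncomputable def kappaEff {n : ℕ} {B : Matrix (Fin n) (Fin n) ℂ} (hB : B.IsHermitian) : ℝ :=
  lambdaMax hB / lambdaMinPos hB

lemma aux_support {n m : ℕ} {A : Matrix (Fin n) (Fin n) ℂ}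
    (hsub : ∀ f : Fin m → Fin n, Function.Injective f → (A.submatrix f f).PosDef)
    (hm : m ≤ n) {v : Fin n → ℂ} (hv : v ≠ 0) (hker : A *ᵥ v = 0) :
    m < (Finset.univ.filter (fun i => v i ≠ 0)).card := by
  classical
  by_contra hle
  push_neg at hle
  obtain ⟨T, hTsub, hTcard⟩ := Finset.exists_superset_card_eq hle (by simpa using hm)
  set f : Fin m → Fin n := fun a => ((T.orderIsoOfFin hTcard a : T) : Fin n) with hf
  have hfinj : Function.Injective f := by
    intro a b hab
    exact (T.orderIsoOfFin hTcard).injective (Subtype.ext hab)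
  have himg : Finset.image f Finset.univ = T := by
    apply Finset.eq_of_subset_of_card_le
    · intro i hi
      simp only [Finset.mem_image] at hi
      obtain ⟨a, _, rfl⟩ := hi
      exact (T.orderIsoOfFin hTcard a).2
    · rw [Finset.card_image_of_injective _ hfinj, Finset.card_univ, Fintype.card_fin, hTcard]
  have hvanish : ∀ i, i ∉ T → v i = 0 := by
    intro i hi
    by_contra h
    exact hi (hTsub (by simp [h]))
  set y : Fin m → ℂ := fun a => v (f a) with hy
  have hy0 : y ≠ 0 := by
    obtain ⟨i, hi⟩ := Function.ne_iff.mp hv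
    simp only [Pi.zero_apply] at hi
    have hiT : i ∈ T := hTsub (by simp [hi])
    rw [← himg, Finset.mem_image] at hiT
    obtain ⟨a, _, ha⟩ := hiT
    intro h
    exact hi (by rw [← ha]; exact congrFun h a)
  have hpos := (posDef_iff_dotProduct_mulVec.mp (hsub f hfinj)).2 hy0
  have hinner : ∀ i, ∑ b, A i (f b) * v (f b) = ∑ j, A i j * v j := by
    intro i
    rw [← Finset.sum_image (g := f) (f := fun j => A i j * v j) (fun a _ b _ h => hfinj h), himg]
    exact Finset.sum_subset (Finset.subset_univ T)
      (fun j _ hj => by rw [hvanish j hj, mul_zero])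
  have heq : star y ⬝ᵥ (A.submatrix f f) *ᵥ y = star v ⬝ᵥ A *ᵥ v := by
    simp only [dotProduct, mulVec, submatrix_apply, Pi.star_apply, hy]
    calc ∑ a : Fin m, star (v (f a)) * ∑ b, A (f a) (f b) * v (f b)
        = ∑ a : Fin m, star (v (f a)) * ∑ j, A (f a) j * v j := by
          exact Finset.sum_congr rfl fun a _ => by rw [hinner]
      _ = ∑ i ∈ T, star (v i) * ∑ j, A i j * v j := by
          rw [← himg, Finset.sum_image (fun a _ b _ h => hfinj h)]
      _ = ∑ i, star (v i) * ∑ j, A i j * v j := by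
          exact Finset.sum_subset (Finset.subset_univ T)
            (fun i _ hi => by rw [hvanish i hi, star_zero, zero_mul])
  rw [heq, hker, dotProduct_zero] at hpos
  exact lt_irrefl _ hpos


lemma aux_entry {n : ℕ} {B : Matrix (Fin n) (Fin n) ℂ} (hB : B.IsHermitian) (i j : Fin n) :
    B i j = ∑ k, (hB.eigenvalues k : ℂ) *
      ((hB.eigenvectorUnitary : Matrix (Fin n) (Fin n) ℂ) i k *
        star ((hB.eigenvectorUnitary : Matrix (Fin n) (Fin n) ℂ) j k)) := by
  conv_lhs => rw [hB.spectral_theorem]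
  simp only [Unitary.conjStarAlgAut_apply, mul_apply, diagonal_apply, Function.comp_apply, star_apply, RCLike.star_def]
  refine Finset.sum_congr rfl fun k _ => ?_
  rw [Finset.sum_eq_single k (fun b _ hb => by simp [hb]) (by simp)]
  simp only [eq_self_iff_true, if_true]
  rw [mul_right_comm, mul_comm]
  rfl


lemma aux_main {n r : ℕ} {A U : Matrix (Fin n) (Fin n) ℂ} {lam : Fin n → ℝ}
    (hUU : star U * U = 1)
    (hrcard : Fintype.card {k : Fin n // lam k ≠ 0} = r)
    (hsupp : ∀ v : Fin n → ℂ, v ≠ 0 → A *ᵥ v = 0 →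
      n - r + 1 < (Finset.univ.filter (fun i => v i ≠ 0)).card)
    {x : Fin n → ℂ}
    (hker : ∀ k, lam k ≠ 0 → A *ᵥ (fun i => x i * star (U i k)) = 0)
    (hex : ∃ i, x i ≠ 0 ∧ ∃ k, lam k ≠ 0 ∧ U i k ≠ 0) : False := by
  classical
  set P := {k : Fin n // lam k ≠ 0} with hP
  set S : Finset (Fin n) := Finset.univ.filter (fun i => x i ≠ 0) with hS
  set s := S.card with hs
  -- the matrix N with columns the conjugated eigenvectors, and M = diag(x) * N
  set N : Matrix (Fin n) P ℂ := Matrix.of (fun i k => star (U i k.1)) with hN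
  set M : Matrix (Fin n) P ℂ := Matrix.of (fun i k => x i * star (U i k.1)) with hM
  set Φ : (P → ℂ) →ₗ[ℂ] (Fin n → ℂ) := M.mulVecLin with hΦ
  -- recovery: N.mulVec is injective with explicit left inverse
  have hrec : ∀ c : P → ℂ, N *ᵥ c = 0 → c = 0 := by
    intro c hc
    funext m
    have h1 : ∑ i, U i m.1 * (N *ᵥ c) i = c m := by
      simp only [mulVec, dotProduct, hN, of_apply, Finset.mul_sum]
      rw [Finset.sum_comm]
      have h2 : ∀ k : P, ∑ i, U i m.1 * (star (U i k.1) * c k)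
          = ((star U * U) k.1 m.1) * c k := by
        intro k
        rw [mul_apply, Finset.sum_mul]
        exact Finset.sum_congr rfl fun i _ => by
          simp only [star_apply, RCLike.star_def]; ring
      rw [Finset.sum_congr rfl fun k _ => h2 k]
      rw [Finset.sum_eq_single m]
      · simp [hUU]
      · intro b _ hb
        have : (b : Fin n) ≠ (m : Fin n) := fun h => hb (Subtype.ext h)
        simp [hUU, one_apply, this]
      · simp
    rw [hc] at h1
    simpa using h1.symm
  -- membership in the kernel of Φ
  have hkerΦ : ∀ c : P → ℂ, Φ c = 0 ↔ ∀ i ∈ S, (N *ᵥ c) i = 0 := by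
    intro c
    have hMc : ∀ i, (M *ᵥ c) i = x i * (N *ᵥ c) i := by
      intro i
      simp only [mulVec, dotProduct, hM, hN, of_apply, Finset.mul_sum]
      exact Finset.sum_congr rfl fun k _ => by ring
    constructor
    · intro h i hi
      have hxi : x i ≠ 0 := by simpa [hS] using hi
      have := congrFun h i
      rw [mulVecLin_apply] at this
      rw [hMc i] at this
      exact (mul_eq_zero.mp this).resolve_left hxi
    · intro h
      funext i
      rw [hΦ, mulVecLin_apply, hMc i]
      by_cases hxi : x i = 0
      · simp [hxi]
      · rw [h i (by simp [hS, hxi]), mul_zero]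
        rfl
  set K := LinearMap.ker Φ with hK
  set W := LinearMap.range Φ with hW
  set d := Module.finrank ℂ K with hd
  set t := Module.finrank ℂ W with ht
  have hrank : t + d = r := by
    have h := LinearMap.finrank_range_add_finrank_ker Φ
    rwa [Module.finrank_fintype_fun_eq_card, hrcard] at h
  -- s ≤ n
  have hsn : s ≤ n := by
    have := Finset.card_le_univ S
    simpa using this
  -- elements of W vanish off S
  have hWoff : ∀ w ∈ W, ∀ i, x i = 0 → w i = 0 := by
    rintro w ⟨c, rfl⟩ i hxi
    simp only [hΦ, mulVecLin_apply, mulVec, dotProduct, hM, of_apply]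
    refine Finset.sum_eq_zero fun k _ => by rw [hxi, zero_mul, zero_mul]
  -- d ≤ n - s
  have hdns : d ≤ n - s := by
    set ρ : K →ₗ[ℂ] ({i : Fin n // x i = 0} → ℂ) :=
      (LinearMap.funLeft ℂ ℂ (fun i : {i : Fin n // x i = 0} => (i : Fin n))).comp
        (N.mulVecLin.comp K.subtype) with hρ
    have hρinj : Function.Injective ρ := by
      rw [← LinearMap.ker_eq_bot, LinearMap.ker_eq_bot']
      intro c hc
      have hNc : N *ᵥ (c : P → ℂ) = 0 := by
        funext i
        by_cases hxi : x i = 0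
        · have := congrFun hc ⟨i, hxi⟩
          simpa [hρ, LinearMap.funLeft] using this
        · have := (hkerΦ (c : P → ℂ)).mp c.2 i (by simp [hS, hxi])
          simpa using this
      have := hrec _ hNc
      exact Subtype.ext this
    have hle := LinearMap.finrank_le_finrank_of_injective hρinj
    rw [Module.finrank_fintype_fun_eq_card] at hle
    have hcard : Fintype.card {i : Fin n // x i = 0} = n - s := by
      rw [Fintype.card_subtype]
      have h3 : Finset.univ.filter (fun i : Fin n => x i = 0) = Sᶜ := by
        ext i
        simp [hS]
      rw [h3, Finset.card_compl, Fintype.card_fin]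
    rwa [hcard] at hle
  -- 1 ≤ t
  have ht1 : 1 ≤ t := by
    obtain ⟨i0, hxi0, k0, hk0, hU0⟩ := hex
    by_contra h
    have ht0 : t = 0 := by omega
    have hWbot : W = ⊥ := Submodule.finrank_eq_zero.mp ht0
    have hz : Φ (Pi.single ⟨k0, hk0⟩ 1) ∈ W := LinearMap.mem_range_self _ _
    rw [hWbot, Submodule.mem_bot] at hz
    have := congrFun hz i0
    simp only [hΦ, mulVecLin_apply, mulVec_single, Pi.smul_apply, op_smul_eq_mul, col_apply, hM, of_apply, mul_one, Pi.zero_apply] at this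
    exact (mul_ne_zero hxi0 (star_ne_zero.mpr hU0)) this
  -- t ≤ s
  have hts : t ≤ s := by
    set σ : W →ₗ[ℂ] ({i : Fin n // i ∈ S} → ℂ) :=
      (LinearMap.funLeft ℂ ℂ (fun i : {i : Fin n // i ∈ S} => (i : Fin n))).comp W.subtype with hσ
    have hσinj : Function.Injective σ := by
      rw [← LinearMap.ker_eq_bot, LinearMap.ker_eq_bot']
      intro w hw
      refine Subtype.ext (funext fun i => ?_)
      by_cases hxi : x i = 0
      · exact hWoff w w.2 i hxi
      · have := congrFun hw (⟨i, by simp [hS, hxi]⟩ : {i : Fin n // i ∈ S})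
        simpa [hσ, LinearMap.funLeft] using this
    have hle := LinearMap.finrank_le_finrank_of_injective hσinj
    rwa [Module.finrank_fintype_fun_eq_card, Fintype.card_coe] at hle
  -- pick T ⊆ S of size t - 1
  obtain ⟨T, hTS, hTcard⟩ := Finset.exists_subset_card_eq
    (show t - 1 ≤ S.card from le_trans (Nat.sub_le t 1) hts)
  -- find a nonzero element of W vanishing on T
  set τ : W →ₗ[ℂ] ({i : Fin n // i ∈ T} → ℂ) :=
    (LinearMap.funLeft ℂ ℂ (fun i : {i : Fin n // i ∈ T} => (i : Fin n))).comp W.subtype with hτ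
  have hτker : LinearMap.ker τ ≠ ⊥ := by
    intro hbot
    have hinj : Function.Injective τ := LinearMap.ker_eq_bot.mp hbot
    have hle := LinearMap.finrank_le_finrank_of_injective hinj
    rw [Module.finrank_fintype_fun_eq_card, Fintype.card_coe, hTcard] at hle
    omega
  obtain ⟨w, hwker, hwne⟩ := Submodule.ne_bot_iff _ |>.mp hτker
  set v : Fin n → ℂ := (w : Fin n → ℂ) with hv
  have hvne : v ≠ 0 := fun h => hwne (Subtype.ext h)
  -- v is in the kernel of A
  have hAM : A * M = 0 := by
    ext i k
    have h := congrFun (hker k.1 k.2) i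
    simp only [Pi.zero_apply, mulVec, dotProduct] at h
    simpa [mul_apply, hM, mul_assoc] using h
  have hAv : A *ᵥ v = 0 := by
    obtain ⟨c, hc⟩ := w.2
    rw [hv, ← hc, hΦ, mulVecLin_apply, mulVec_mulVec, hAM, zero_mulVec]
  -- the support of v is inside S \ T
  have hsuppsub : (Finset.univ.filter (fun i => v i ≠ 0)) ⊆ S \ T := by
    intro i hi
    simp only [Finset.mem_filter] at hi
    rw [Finset.mem_sdiff]
    constructor
    · by_contra hiS
      have hxi : x i = 0 := by
        by_contra hxi
        exact hiS (by simp [hS, hxi])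
      exact hi.2 (hWoff v w.2 i hxi)
    · intro hiT
      have := congrFun hwker (⟨i, hiT⟩ : {i : Fin n // i ∈ T})
      simp only [hτ, LinearMap.funLeft, LinearMap.comp_apply, Submodule.coe_subtype,
        LinearMap.coe_mk, AddHom.coe_mk, Pi.zero_apply] at this
      exact hi.2 this
  have hcard1 : (Finset.univ.filter (fun i => v i ≠ 0)).card ≤ s - (t - 1) := by
    calc (Finset.univ.filter (fun i => v i ≠ 0)).card ≤ (S \ T).card :=
          Finset.card_le_card hsuppsub
      _ = s - (t - 1) := by rw [Finset.card_sdiff_of_subset hTS, hTcard]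
  have hbig := hsupp v hvne hAv
  omega


/-- **Theorem (Yang et al.).** Let `A, B` be `n × n` complex positive semidefinite matrices with
`r = rank B ≥ 1`. If `B` has no zero main diagonal entry and every principal submatrix of `A` of
order `n - r + 1` is positive definite, then the Hadamard product `A ⊙ B` is positive definite. -/
theorem stmt_0 {n : ℕ} (A B : Matrix (Fin n) (Fin n) ℂ)
    (hA : A.PosSemidef) (hB : B.PosSemidef) (r : ℕ) (hr : r = B.rank) (hr1 : 1 ≤ r)
    (hdiag : ∀ i, B i i ≠ 0)
    (hsub : ∀ f : Fin (n - r + 1) → Fin n, Function.Injective f → (A.submatrix f f).PosDef) :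
    (A ⊙ B).PosDef := by
  classical
  have hBh : B.IsHermitian := hB.1
  set U : Matrix (Fin n) (Fin n) ℂ := (hBh.eigenvectorUnitary : Matrix (Fin n) (Fin n) ℂ)
    with hU
  set lam : Fin n → ℝ := hBh.eigenvalues with hlam
  have hUU : star U * U = 1 := by
    rw [hU]
    exact Matrix.mem_unitaryGroup_iff'.mp hBh.eigenvectorUnitary.2
  have hrcard : Fintype.card {k : Fin n // lam k ≠ 0} = r := by
    rw [hr, hBh.rank_eq_card_non_zero_eigs]
  have hrn : r ≤ n := by
    rw [hr]
    calc B.rank ≤ Fintype.card (Fin n) := B.rank_le_card_width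
      _ = n := Fintype.card_fin n
  have hm : n - r + 1 ≤ n := by omega
  have hsupp : ∀ v : Fin n → ℂ, v ≠ 0 → A *ᵥ v = 0 →
      n - r + 1 < (Finset.univ.filter (fun i => v i ≠ 0)).card :=
    fun v hv hker => aux_support hsub hm hv hker
  rw [posDef_iff_dotProduct_mulVec]
  constructor
  · -- Hermitian
    ext i j
    simp only [conjTranspose_apply, hadamard_apply, star_mul']
    rw [mul_comm, ← conjTranspose_apply A, ← conjTranspose_apply B, hA.1, hB.1]
    exact mul_comm _ _
  · intro x hx
    set z : Fin n → Fin n → ℂ := fun k i => x i * star (U i k) with hz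
    have hQF : star x ⬝ᵥ (A ⊙ B) *ᵥ x
        = ∑ k, (lam k : ℂ) * (star (z k) ⬝ᵥ A *ᵥ z k) := by
      have e1 : star x ⬝ᵥ (A ⊙ B) *ᵥ x
          = ∑ i, ∑ j, ∑ k, (lam k : ℂ) *
            (star (x i) * U i k * A i j * (x j * star (U j k))) := by
        simp only [dotProduct, mulVec, hadamard_apply, Pi.star_apply, Finset.mul_sum]
        refine Finset.sum_congr rfl fun i _ => Finset.sum_congr rfl fun j _ => ?_
        rw [aux_entry hBh i j, Finset.mul_sum, Finset.sum_mul, Finset.mul_sum]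
        simp only [← hU, ← hlam]
        refine Finset.sum_congr rfl fun k _ => ?_
        ring
      have e2 : ∑ k, (lam k : ℂ) * (star (z k) ⬝ᵥ A *ᵥ z k)
          = ∑ k, ∑ i, ∑ j, (lam k : ℂ) *
            (star (x i) * U i k * A i j * (x j * star (U j k))) := by
        refine Finset.sum_congr rfl fun k _ => ?_
        simp only [dotProduct, mulVec, Pi.star_apply, hz, Finset.mul_sum, star_mul',
          star_star]
        refine Finset.sum_congr rfl fun i _ => Finset.sum_congr rfl fun j _ => ?_
        ring
      rw [e1, e2]
      rw [show (∑ i, ∑ j, ∑ k, (lam k : ℂ) *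
            (star (x i) * U i k * A i j * (x j * star (U j k))))
          = ∑ i, ∑ k, ∑ j, (lam k : ℂ) *
            (star (x i) * U i k * A i j * (x j * star (U j k)))
        from Finset.sum_congr rfl fun i _ => Finset.sum_comm]
      exact Finset.sum_comm
    have hterm : ∀ k ∈ Finset.univ, (0:ℂ) ≤ (lam k : ℂ) * (star (z k) ⬝ᵥ A *ᵥ z k) := by
      intro k _
      have h1 : (0:ℂ) ≤ (lam k : ℂ) := by
        rw [Complex.zero_le_real]
        exact hB.eigenvalues_nonneg k
      exact mul_nonneg h1 ((posSemidef_iff_dotProduct_mulVec.mp hA).2 (z k))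
    have hnonneg : 0 ≤ star x ⬝ᵥ (A ⊙ B) *ᵥ x := by
      rw [hQF]
      exact Finset.sum_nonneg hterm
    rcases hnonneg.lt_or_eq with h | h
    · exact h
    · exfalso
      have hzero : ∀ k ∈ Finset.univ, (lam k : ℂ) * (star (z k) ⬝ᵥ A *ᵥ z k) = 0 :=
        (Finset.sum_eq_zero_iff_of_nonneg hterm).mp (by rw [← hQF, ← h])
      have hker : ∀ k, lam k ≠ 0 → A *ᵥ (fun i => x i * star (U i k)) = 0 := by
        intro k hk
        have h1 := hzero k (Finset.mem_univ k)
        have h2 : (lam k : ℂ) ≠ 0 := by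
          simpa using hk
        have h3 : star (z k) ⬝ᵥ A *ᵥ z k = 0 := by
          rcases mul_eq_zero.mp h1 with h | h
          · exact absurd h h2
          · exact h
        exact (hA.dotProduct_mulVec_zero_iff (z k)).mp h3
      have hex : ∃ i, x i ≠ 0 ∧ ∃ k, lam k ≠ 0 ∧ U i k ≠ 0 := by
        obtain ⟨i0, hi0⟩ := Function.ne_iff.mp hx
        simp only [Pi.zero_apply] at hi0
        refine ⟨i0, hi0, ?_⟩
        by_contra hc
        push_neg at hc
        apply hdiag i0
        rw [aux_entry hBh i0 i0]
        simp only [← hU, ← hlam]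
        refine Finset.sum_eq_zero fun k _ => ?_
        by_cases hk : lam k = 0
        · simp [hk]
        · rw [hc k hk]
          simp
      exact aux_main hUU hrcard hsupp hker hex
end

section
/- Let A, B = [b_ij] be n×n complex positive semidefinite matrices with r = rank(B) ≥ 1. Suppose that for every rank-r orthogonal projection P in M_n one has A ∘ P ⪰ μ_{n−r+1}(A) (I ∘ P). Then A ∘ B ⪰ (μ_{n−r+1}(A)/κ_eff(B)) (I ∘ B). -/
open Matrix
open scoped Matrix ComplexOrder

lemma psd_smul' {n : ℕ} {M : Matrix (Fin n) (Fin n) ℂ} (hM : M.PosSemidef) {c : ℝ}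
    (hc : 0 ≤ c) : ((c : ℂ) • M).PosSemidef := by
  constructor
  · unfold Matrix.IsHermitian
    rw [conjTranspose_smul, hM.1.eq]
    congr 1
    simp
  · exact (hM.smul (a := (c : ℂ)) (by exact_mod_cast hc)).2

lemma psd_sum {n : ℕ} {ι : Type*} (s : Finset ι) (f : ι → Matrix (Fin n) (Fin n) ℂ)
    (hf : ∀ i ∈ s, (f i).PosSemidef) : (∑ i ∈ s, f i).PosSemidef :=
  Finset.sum_induction f _ (fun _ _ ha hb => ha.add hb) .zero hf

lemma hadamard_psd {n : ℕ} {A X : Matrix (Fin n) (Fin n) ℂ} (hA : A.PosSemidef)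
    (hX : X.PosSemidef) : (A ⊙ X).PosSemidef := by
  obtain ⟨S, hSherm, hSS⟩ : ∃ S : Matrix (Fin n) (Fin n) ℂ, S.IsHermitian ∧ S * S = X :=
    by open scoped MatrixOrder in
      exact ⟨CFC.sqrt X, (CFC.sqrt_nonneg X).posSemidef.1, CFC.sqrt_mul_sqrt_self X hX.nonneg⟩
  have key : A ⊙ X = ∑ k : Fin n,
      (diagonal fun i => S i k) * A * (diagonal fun i => S i k)ᴴ := by
    ext i j
    rw [Matrix.sum_apply]
    have h1 : ∀ k : Fin n,
        ((diagonal fun i => S i k) * A * (diagonal fun i => S i k)ᴴ) i j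
          = S i k * A i j * star (S j k) := by
      intro k
      rw [diagonal_conjTranspose, mul_diagonal, diagonal_mul]
      rfl
    simp only [h1, hadamard_apply]
    have hs : ∀ k, star (S j k) = S k j := fun k =>
      congrFun (congrFun hSherm.eq k) j ▸ rfl
    calc A i j * X i j = A i j * ∑ k, S i k * S k j := by rw [← hSS, mul_apply]
      _ = ∑ k, S i k * A i j * star (S j k) := by
          rw [Finset.mul_sum]; apply Finset.sum_congr rfl; intro k _; rw [hs]; ring
  rw [key]
  exact psd_sum _ _ fun k _ => hA.mul_mul_conjTranspose_same _

lemma conj_psd {n : ℕ} (U : Matrix (Fin n) (Fin n) ℂ) (w : Fin n → ℝ)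
    (hw : ∀ i, 0 ≤ w i) :
    (U * diagonal (fun i => (w i : ℂ)) * star U).PosSemidef := by
  rw [star_eq_conjTranspose]
  exact (Matrix.PosSemidef.diagonal fun i => Complex.zero_le_real.mpr (hw i)).mul_mul_conjTranspose_same U

lemma conj_smul {n : ℕ} (U : Matrix (Fin n) (Fin n) ℂ) (w : Fin n → ℂ) (c : ℂ) :
    c • (U * diagonal w * star U) = U * diagonal (fun i => c * w i) * star U := by
  have : (fun i => c * w i) = c • w := by ext i; simp
  rw [this, diagonal_smul, mul_smul_comm, smul_mul_assoc]

lemma conj_sub {n : ℕ} (U : Matrix (Fin n) (Fin n) ℂ) (v w : Fin n → ℂ) :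
    U * diagonal v * star U - U * diagonal w * star U
      = U * diagonal (fun i => v i - w i) * star U := by
  have : (fun i => v i - w i) = v - w := rfl
  rw [this, ← Matrix.sub_mul, ← Matrix.mul_sub, diagonal_sub]; rfl

/-- If `A ⊙ P ⪰ μ_{n-r+1}(A) (I ⊙ P)` for every rank-`r` orthogonal projection `P`, then
`A ⊙ B ⪰ (μ_{n-r+1}(A)/κ_eff(B)) (I ⊙ B)`. -/
theorem stmt_1 {n : ℕ} (A B : Matrix (Fin n) (Fin n) ℂ)
    (hA : A.PosSemidef) (hB : B.PosSemidef) (r : ℕ) (hr : r = B.rank) (hr1 : 1 ≤ r)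
    (hproj : ∀ P : Matrix (Fin n) (Fin n) ℂ, P.IsHermitian → P * P = P → P.rank = r →
      (A ⊙ P - ((mu (n - r + 1) A : ℝ) : ℂ) •
        ((1 : Matrix (Fin n) (Fin n) ℂ) ⊙ P)).PosSemidef) :
    (A ⊙ B - ((mu (n - r + 1) A / kappaEff hB.1 : ℝ) : ℂ) •
      ((1 : Matrix (Fin n) (Fin n) ℂ) ⊙ B)).PosSemidef := by
  classical
  set μ : ℝ := mu (n - r + 1) A with hμdef
  have hBH : B.IsHermitian := hB.1
  set e : Fin n → ℝ := hBH.eigenvalues with he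
  have he0 : ∀ i, 0 ≤ e i := fun i => hB.eigenvalues_nonneg i
  set U : Matrix (Fin n) (Fin n) ℂ := (hBH.eigenvectorUnitary : Matrix (Fin n) (Fin n) ℂ)
    with hUdef
  have hspec : B = U * diagonal (fun i => ((e i : ℝ) : ℂ)) * star U := hBH.spectral_theorem
  have hUU' : star U * U = 1 := mem_unitaryGroup_iff'.mp hBH.eigenvectorUnitary.2
  -- a positive eigenvalue exists
  have hcard : 0 < Fintype.card {i // e i ≠ 0} := by
    rw [← hBH.rank_eq_card_non_zero_eigs, ← hr]; exact hr1
  obtain ⟨⟨i0, hi0⟩⟩ := Fintype.card_pos_iff.mp hcard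
  have hi0' : 0 < e i0 := lt_of_le_of_ne (he0 i0) (Ne.symm hi0)
  set lr : ℝ := lambdaMinPos hBH with hlrdef
  set l1 : ℝ := lambdaMax hBH with hl1def
  have hSfin : ({t : ℝ | (∃ i, e i = t) ∧ 0 < t}).Finite := by
    apply Set.Finite.subset (Set.finite_range e)
    rintro t ⟨⟨i, rfl⟩, -⟩; exact ⟨i, rfl⟩
  have hSne : Set.Nonempty {t : ℝ | (∃ i, e i = t) ∧ 0 < t} := ⟨e i0, ⟨i0, rfl⟩, hi0'⟩
  have hlr_mem : lr ∈ {t : ℝ | (∃ i, e i = t) ∧ 0 < t} := hSne.csInf_mem hSfin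
  have hlr_pos : 0 < lr := hlr_mem.2
  have hlr_le : ∀ i, 0 < e i → lr ≤ e i := fun i hi => csInf_le hSfin.bddBelow ⟨⟨i, rfl⟩, hi⟩
  have hle1 : ∀ i, e i ≤ l1 := fun i => le_ciSup (Set.Finite.bddAbove (Set.finite_range e)) i
  have hl1_pos : 0 < l1 := lt_of_lt_of_le hi0' (hle1 i0)
  have hμ0 : 0 ≤ μ := by
    apply Real.sInf_nonneg
    rintro t ⟨f, hf, hherm, i, rfl⟩
    exact (hA.submatrix f).eigenvalues_nonneg i
  set d : Fin n → ℝ := fun i => if 0 < e i then 1 else 0 with hd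
  have hd0 : ∀ i, 0 ≤ d i := fun i => by by_cases h : 0 < e i <;> simp [hd, h]
  set P : Matrix (Fin n) (Fin n) ℂ := U * diagonal (fun i => ((d i : ℝ) : ℂ)) * star U with hP
  have hPpsd : P.PosSemidef := conj_psd U d hd0
  have hPP : P * P = P := by
    rw [hP]
    have h1 : (U * diagonal (fun i => ((d i : ℝ) : ℂ)) * star U) *
        (U * diagonal (fun i => ((d i : ℝ) : ℂ)) * star U)
        = U * (diagonal (fun i => ((d i : ℝ) : ℂ)) * ((star U * U) *
            diagonal (fun i => ((d i : ℝ) : ℂ)))) * star U := by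
      simp only [Matrix.mul_assoc]
    rw [h1, hUU', Matrix.one_mul, diagonal_mul_diagonal]
    have h2 : (fun i => ((d i : ℝ) : ℂ) * ((d i : ℝ) : ℂ)) = fun i => ((d i : ℝ) : ℂ) := by
      funext i; by_cases h : 0 < e i <;> simp [hd, h]
    rw [h2]
  have hrankP : P.rank = r := by
    have hdetU : IsUnit U.det := Matrix.UnitaryGroup.det_isUnit hBH.eigenvectorUnitary
    have hdetUs : IsUnit (star U).det := by
      rw [star_eq_conjTranspose, det_conjTranspose]; exact hdetU.star
    rw [hP, rank_mul_eq_left_of_isUnit_det _ _ hdetUs,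
      rank_mul_eq_right_of_isUnit_det _ _ hdetU, rank_diagonal, hr,
      hBH.rank_eq_card_non_zero_eigs]
    apply Fintype.card_congr
    apply Equiv.subtypeEquivRight
    intro i
    by_cases h : 0 < e i
    · have h1' : hBH.eigenvalues i ≠ 0 := h.ne'
      simp [hd, h, h1']
    · have h0' : hBH.eigenvalues i = 0 := le_antisymm (not_lt.mp h) (he0 i)
      simp [hd, h, h0']
  have hmain := hproj P hPpsd.1 hPP hrankP
  have hw1 : ∀ i, 0 ≤ e i - lr * d i := by
    intro i
    by_cases h : 0 < e i
    · simp only [hd, if_pos h, mul_one]; linarith [hlr_le i h]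
    · simp only [hd, if_neg h, mul_zero, sub_zero]; exact he0 i
  have hw2 : ∀ i, 0 ≤ l1 * d i - e i := by
    intro i
    by_cases h : 0 < e i
    · simp only [hd, if_pos h, mul_one]; linarith [hle1 i]
    · simp only [hd, if_neg h, mul_zero, zero_sub, neg_nonneg]
      exact le_antisymm (not_lt.mp h) (he0 i) ▸ le_of_eq rfl
  have hBlrP : B - (lr : ℂ) • P = U * diagonal (fun i => ((e i - lr * d i : ℝ) : ℂ)) * star U := by
    rw [hP, conj_smul, hspec, conj_sub]
    congr 2
    funext i
    push_cast
    ring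
  have hpsd1 : (B - (lr : ℂ) • P).PosSemidef := by rw [hBlrP]; exact conj_psd U _ hw1
  have hl1PB : (l1 : ℂ) • P - B = U * diagonal (fun i => ((l1 * d i - e i : ℝ) : ℂ)) * star U := by
    rw [hP, conj_smul, hspec, conj_sub]
    congr 2
    funext i
    push_cast
    ring
  have hpsd2 : ((l1 : ℂ) • P - B).PosSemidef := by rw [hl1PB]; exact conj_psd U _ hw2
  set c2 : ℝ := μ * lr / l1 with hc2
  have hc2nonneg : 0 ≤ c2 := div_nonneg (mul_nonneg hμ0 hlr_pos.le) hl1_pos.le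
  have hkey : (c2 : ℂ) * (l1 : ℂ) = (μ : ℂ) * (lr : ℂ) := by
    have h : c2 * l1 = μ * lr := div_mul_cancel₀ _ hl1_pos.ne'
    exact_mod_cast h
  have hscal : ((μ / kappaEff hB.1 : ℝ) : ℂ) = (c2 : ℂ) := by
    have h1 : kappaEff hB.1 = l1 / lr := rfl
    rw [h1]
    norm_cast
    rw [div_div_eq_mul_div]
  have hgoal_eq : A ⊙ B - ((μ / kappaEff hB.1 : ℝ) : ℂ) • ((1 : Matrix (Fin n) (Fin n) ℂ) ⊙ B)
      = (A ⊙ (B - (lr : ℂ) • P))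
        + ((lr : ℂ) • (A ⊙ P - (μ : ℂ) • ((1 : Matrix (Fin n) (Fin n) ℂ) ⊙ P)))
        + ((c2 : ℂ) • ((1 : Matrix (Fin n) (Fin n) ℂ) ⊙ ((l1 : ℂ) • P - B))) := by
    rw [hscal]
    ext i j
    simp only [Matrix.sub_apply, Matrix.add_apply, Matrix.smul_apply, hadamard_apply,
      smul_eq_mul]
    linear_combination (-((1 : Matrix (Fin n) (Fin n) ℂ) i j * P i j)) * hkey
  rw [hgoal_eq]
  exact ((hadamard_psd hA hpsd1).add (psd_smul' hmain hlr_pos.le)).add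
    (psd_smul' (hadamard_psd .one hpsd2) hc2nonneg)
end

section
/- Let A, B = [b_ij] be n×n complex positive semidefinite matrices with r = rank(B) ≥ 1. Suppose that for every rank-r orthogonal projection P in M_n one has A ∘ P ⪰ μ_{n−r+1}(A) (I ∘ P). Then λ_min(A ∘ B) ≥ (μ_{n−r+1}(A)/κ_eff(B)) · min_{1≤i≤n} b_ii. -/
open Matrix
open scoped Matrix ComplexOrder

theorem my_schur {n : ℕ} {A M : Matrix (Fin n) (Fin n) ℂ}
    (hA : A.PosSemidef) (hM : M.PosSemidef) : (A ⊙ M).PosSemidef := by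
  obtain ⟨N, hN⟩ : ∃ N : Matrix (Fin n) (Fin n) ℂ, M = Nᴴ * N := by
    open scoped MatrixOrder in
    obtain ⟨N, hN⟩ := CStarAlgebra.nonneg_iff_eq_star_mul_self.mp hM.nonneg
    exact ⟨N, hN⟩
  have hMij : ∀ i j, M i j = ∑ k, star (N k i) * N k j := by
    intro i j; rw [hN]; simp [Matrix.mul_apply, Matrix.conjTranspose_apply]
  refine Matrix.PosSemidef.of_dotProduct_mulVec_nonneg ?_ ?_
  · ext i j
    simp only [Matrix.conjTranspose_apply, Matrix.hadamard_apply, star_mul']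
    rw [← Matrix.conjTranspose_apply A, ← Matrix.conjTranspose_apply M, hA.1.eq, hM.1.eq]
  · intro x
    have key : dotProduct (star x) ((A ⊙ M) *ᵥ x)
        = ∑ k, dotProduct (star (fun j => N k j * x j)) (A *ᵥ fun j => N k j * x j) := by
      calc dotProduct (star x) ((A ⊙ M) *ᵥ x)
          = ∑ i, ∑ j, ∑ k, star (N k i) * star (x i) * A i j * (N k j * x j) := by
            simp only [dotProduct, Matrix.mulVec, Matrix.hadamard_apply, Pi.star_apply,
              Finset.mul_sum]
            refine Finset.sum_congr rfl fun i _ => Finset.sum_congr rfl fun j _ => ?_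
            rw [hMij]
            simp only [Finset.mul_sum, Finset.sum_mul]
            exact Finset.sum_congr rfl fun k _ => by ring
        _ = ∑ i, ∑ k, ∑ j, star (N k i) * star (x i) * A i j * (N k j * x j) :=
            Finset.sum_congr rfl fun i _ => Finset.sum_comm
        _ = ∑ k, ∑ i, ∑ j, star (N k i) * star (x i) * A i j * (N k j * x j) :=
            Finset.sum_comm
        _ = ∑ k, dotProduct (star (fun j => N k j * x j)) (A *ᵥ fun j => N k j * x j) := by
            refine Finset.sum_congr rfl fun k _ => ?_
            simp only [dotProduct, Matrix.mulVec, Pi.star_apply, star_mul', Finset.mul_sum]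
            refine Finset.sum_congr rfl fun i _ => Finset.sum_congr rfl fun j _ => by ring
    rw [key]
    exact Finset.sum_nonneg fun k _ => hA.dotProduct_mulVec_nonneg _

theorem my_diag_re_nonneg {n : ℕ} {M : Matrix (Fin n) (Fin n) ℂ}
    (hM : M.PosSemidef) (i : Fin n) : 0 ≤ (M i i).re := by
  have h := hM.dotProduct_mulVec_nonneg (Pi.single i 1)
  have heq : dotProduct (star (Pi.single i 1)) (M *ᵥ Pi.single i 1) = M i i := by
    simp [dotProduct, Matrix.mulVec_single, Pi.single_apply, Finset.sum_ite_eq]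
  rw [heq] at h
  exact (Complex.le_def.mp h).1

theorem my_eig_ge {n : ℕ} {M : Matrix (Fin n) (Fin n) ℂ} (hM : M.IsHermitian) (c : ℝ)
    (h : (M - (c : ℂ) • 1).PosSemidef) (i : Fin n) : c ≤ hM.eigenvalues i := by
  set v : Fin n → ℂ := ⇑(hM.eigenvectorBasis i) with hv
  have hvv : dotProduct (star v) v = 1 := by
    have h1 : (inner ℂ (hM.eigenvectorBasis i) (hM.eigenvectorBasis i) : ℂ) = 1 := by
      rw [inner_self_eq_norm_sq_to_K]
      simp [hM.eigenvectorBasis.orthonormal.1 i]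
    rw [EuclideanSpace.inner_eq_star_dotProduct, dotProduct_comm] at h1
    exact h1
  have h2 := h.dotProduct_mulVec_nonneg v
  have h3 : dotProduct (star v) ((M - (c : ℂ) • 1) *ᵥ v)
      = dotProduct (star v) (M *ᵥ v) - (c : ℂ) := by
    rw [Matrix.sub_mulVec, dotProduct_sub, Matrix.smul_mulVec, Matrix.one_mulVec,
      dotProduct_smul, hvv]
    simp
  rw [h3] at h2
  have h4 := (Complex.le_def.mp h2).1
  simp only [Complex.zero_re, Complex.sub_re, Complex.ofReal_re] at h4
  have h5 := hM.eigenvalues_eq i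
  rw [h5]
  simpa using h4

/-- If `A ⊙ P ⪰ μ_{n-r+1}(A) (I ⊙ P)` for every rank-`r` orthogonal projection `P`, then
`λ_min(A ⊙ B) ≥ (μ_{n-r+1}(A)/κ_eff(B)) · min_i b_ii`. -/
theorem stmt_2 {n : ℕ} (A B : Matrix (Fin n) (Fin n) ℂ)
    (hA : A.PosSemidef) (hB : B.PosSemidef) (r : ℕ) (hr : r = B.rank) (hr1 : 1 ≤ r)
    (hproj : ∀ P : Matrix (Fin n) (Fin n) ℂ, P.IsHermitian → P * P = P → P.rank = r →
      (A ⊙ P - ((mu (n - r + 1) A : ℝ) : ℂ) •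
        ((1 : Matrix (Fin n) (Fin n) ℂ) ⊙ P)).PosSemidef)
    (hAB : (A ⊙ B).IsHermitian) :
    lambdaMin hAB ≥ mu (n - r + 1) A / kappaEff hB.1 * ⨅ i, (B i i).re := by
  classical
  have hH : B.IsHermitian := hB.1
  set d : Fin n → ℝ := hH.eigenvalues with hd
  set U : Matrix (Fin n) (Fin n) ℂ := (hH.eigenvectorUnitary : Matrix (Fin n) (Fin n) ℂ)
    with hUdef
  have hU1 : Uᴴ * U = 1 := by
    have := Matrix.mem_unitaryGroup_iff'.mp hH.eigenvectorUnitary.2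
    simpa [Matrix.star_eq_conjTranspose] using this
  have hU2 : U * Uᴴ = 1 := by
    have := Matrix.mem_unitaryGroup_iff.mp hH.eigenvectorUnitary.2
    simpa [Matrix.star_eq_conjTranspose] using this
  -- positivity of n
  have hrn : r ≤ n := by
    rw [hr]
    exact B.rank_le_width
  have hn : 0 < n := lt_of_lt_of_le hr1 hrn
  haveI : Nonempty (Fin n) := Fin.pos_iff_nonempty.mp hn
  -- eigenvalue facts
  have hd0 : ∀ i, 0 ≤ d i := fun i => hB.eigenvalues_nonneg i
  obtain ⟨⟨i0, hi0⟩⟩ : Nonempty {i // d i ≠ 0} := by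
    apply Fintype.card_pos_iff.mp
    rw [← hH.rank_eq_card_non_zero_eigs, ← hr]
    exact hr1
  have hdi0 : 0 < d i0 := (hd0 i0).lt_of_ne (Ne.symm hi0)
  set μ : ℝ := mu (n - r + 1) A with hμ
  set l1 : ℝ := lambdaMax hH with hl1
  set lr : ℝ := lambdaMinPos hH with hlr
  have hl1_ge : ∀ i, d i ≤ l1 := fun i => le_ciSup (Set.finite_range d).bddAbove i
  have hl1pos : 0 < l1 := lt_of_lt_of_le hdi0 (hl1_ge i0)
  set S : Set ℝ := {t : ℝ | (∃ i, d i = t) ∧ 0 < t} with hS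
  have hSfin : S.Finite := (Set.finite_range d).subset fun t ht => ht.1
  have hSne : S.Nonempty := ⟨d i0, ⟨i0, rfl⟩, hdi0⟩
  have hlr_mem : lr ∈ S := hSne.csInf_mem hSfin
  have hlrpos : 0 < lr := hlr_mem.2
  have hlr_le : ∀ i, d i ≠ 0 → lr ≤ d i := fun i hi =>
    csInf_le hSfin.bddBelow ⟨⟨i, rfl⟩, (hd0 i).lt_of_ne (Ne.symm hi)⟩
  have hμ0 : 0 ≤ μ := by
    apply Real.sInf_nonneg
    rintro t ⟨f, hf, hherm, i, rfl⟩
    exact (hA.submatrix f).eigenvalues_nonneg i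
  -- the projection P
  set χ : Fin n → ℂ := fun i => if d i = 0 then 0 else 1 with hχ
  set P : Matrix (Fin n) (Fin n) ℂ := U * diagonal χ * Uᴴ with hPdef
  have hstarχ : star χ = χ := by
    funext i
    by_cases h : d i = 0 <;> simp [hχ, h, Pi.star_apply]
  have hDherm : (diagonal χ)ᴴ = diagonal χ := by
    rw [diagonal_conjTranspose, hstarχ]
  have hPherm : P.IsHermitian := by
    show Pᴴ = P
    rw [hPdef, conjTranspose_mul, conjTranspose_mul, conjTranspose_conjTranspose, hDherm,
      mul_assoc]
  have hχχ : (fun i => χ i * χ i) = χ := by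
    funext i
    by_cases h : d i = 0 <;> simp [hχ, h]
  have hPP : P * P = P := by
    rw [hPdef]
    calc U * diagonal χ * Uᴴ * (U * diagonal χ * Uᴴ)
        = U * diagonal χ * (Uᴴ * U) * diagonal χ * Uᴴ := by
          simp only [Matrix.mul_assoc]
      _ = U * diagonal χ * Uᴴ := by
          rw [hU1, mul_one, Matrix.mul_assoc U, diagonal_mul_diagonal, hχχ]
  have hdetU : IsUnit U.det := by
    apply IsUnit.of_mul_eq_one (Uᴴ.det)
    rw [← det_mul, hU2, det_one]
  have hdetUH : IsUnit (Uᴴ).det := by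
    apply IsUnit.of_mul_eq_one (U.det)
    rw [← det_mul, hU1, det_one]
  have hPrank : P.rank = r := by
    rw [hPdef, Matrix.mul_assoc, Matrix.rank_mul_eq_right_of_isUnit_det U _ hdetU,
      Matrix.rank_mul_eq_left_of_isUnit_det Uᴴ _ hdetUH, Matrix.rank_diagonal]
    rw [hr, hH.rank_eq_card_non_zero_eigs]
    apply Fintype.card_congr
    apply Equiv.subtypeEquivRight
    intro i
    rw [← hd]
    by_cases h : d i = 0 <;> simp [hχ, h]
  -- spectral decomposition of B
  have hBspec : B = U * diagonal (fun i => (d i : ℂ)) * Uᴴ := by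
    have := hH.spectral_theorem
    rw [Unitary.conjStarAlgAut_apply] at this
    rw [← Matrix.star_eq_conjTranspose]
    exact this
  -- conjugation helper
  have conj_psd : ∀ g : Fin n → ℝ, (∀ i, 0 ≤ g i) →
      (U * diagonal (fun i => (g i : ℂ)) * Uᴴ).PosSemidef := by
    intro g hg
    exact (posSemidef_diagonal_iff.mpr fun i => by
      exact_mod_cast Complex.zero_le_real.mpr (hg i)).mul_mul_conjTranspose_same U
  have hsmulP : ∀ t : ℝ, (t : ℂ) • P = U * diagonal (fun i => (t : ℂ) * χ i) * Uᴴ := by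
    intro t
    rw [hPdef, ← smul_mul_assoc, ← mul_smul_comm, ← diagonal_smul]
    congr
  -- B - lr • P is PSD
  have hBP : (B - (lr : ℂ) • P).PosSemidef := by
    have key : B - (lr : ℂ) • P
        = U * diagonal (fun i => ((d i - if d i = 0 then 0 else lr : ℝ) : ℂ)) * Uᴴ := by
      rw [hBspec, hsmulP, ← Matrix.sub_mul, ← Matrix.mul_sub, diagonal_sub]
      congr 1
      congr 1
      exact congrArg diagonal (funext fun i => by
        by_cases h : d i = 0 <;> simp [hχ, h, Complex.ofReal_sub])
    rw [key]
    apply conj_psd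
    intro i
    by_cases h : d i = 0
    · simp [h]
    · simp only [h, if_false, sub_nonneg]
      exact hlr_le i h
  -- l1 • P - B is PSD
  have hPB : ((l1 : ℂ) • P - B).PosSemidef := by
    have key : (l1 : ℂ) • P - B
        = U * diagonal (fun i => (((if d i = 0 then 0 else l1) - d i : ℝ) : ℂ)) * Uᴴ := by
      rw [hBspec, hsmulP, ← Matrix.sub_mul, ← Matrix.mul_sub, diagonal_sub]
      congr 1
      congr 1
      exact congrArg diagonal (funext fun i => by
        by_cases h : d i = 0 <;> simp [hχ, h, Complex.ofReal_sub])
    rw [key]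
    apply conj_psd
    intro i
    by_cases h : d i = 0
    · simp [h]
    · simp only [h, if_false, sub_nonneg]
      exact hl1_ge i
  -- P is PSD
  have hPpsd : P.PosSemidef := by
    rw [hPdef]
    refine (posSemidef_diagonal_iff.mpr fun i => ?_).mul_mul_conjTranspose_same U
    by_cases h : d i = 0 <;> simp [hχ, h]
  have hPiire : ∀ i, 0 ≤ (P i i).re := fun i => my_diag_re_nonneg hPpsd i
  have hBiire : ∀ i, 0 ≤ (B i i).re := fun i => my_diag_re_nonneg hB i
  have hdiag : ∀ i, (B i i).re ≤ l1 * (P i i).re := by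
    intro i
    have h1 := my_diag_re_nonneg hPB i
    have h2 : (((l1 : ℂ) • P - B) i i).re = l1 * (P i i).re - (B i i).re := by
      simp [Matrix.sub_apply, Matrix.smul_apply, Complex.sub_re, smul_eq_mul,
        Complex.re_ofReal_mul]
    rw [h2] at h1
    linarith
  -- the constant
  set binf : ℝ := ⨅ i, (B i i).re with hbinf
  have hbinf_le : ∀ i, binf ≤ (B i i).re := fun i =>
    ciInf_le (Set.finite_range _).bddBelow i
  have hbinf0 : 0 ≤ binf := le_ciInf hBiire
  set c : ℝ := μ * lr / l1 * binf with hc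
  have hc_le : ∀ i, c ≤ μ * lr * (P i i).re := by
    intro i
    have h0 : 0 ≤ μ * lr / l1 := by positivity
    calc c ≤ μ * lr / l1 * (B i i).re := mul_le_mul_of_nonneg_left (hbinf_le i) h0
      _ ≤ μ * lr / l1 * (l1 * (P i i).re) := mul_le_mul_of_nonneg_left (hdiag i) h0
      _ = μ * lr * (P i i).re := by
        field_simp
  -- hproj applied to P
  have hprojP := hproj P hPherm hPP hPrank
  -- the smul of a PSD is PSD
  have hsmul : ((lr : ℂ) • (A ⊙ P - ((μ : ℝ) : ℂ) •
      ((1 : Matrix (Fin n) (Fin n) ℂ) ⊙ P))).PosSemidef := by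
    refine Matrix.PosSemidef.of_dotProduct_mulVec_nonneg ?_ ?_
    · show _ᴴ = _
      rw [conjTranspose_smul, hprojP.1.eq]
      congr 1
      simp [Complex.star_def, Complex.conj_ofReal]
    · intro x
      rw [Matrix.smul_mulVec, dotProduct_smul, smul_eq_mul]
      exact mul_nonneg (Complex.zero_le_real.mpr hlrpos.le) (hprojP.dotProduct_mulVec_nonneg x)
  -- the diagonal remainder
  have hDrem : (diagonal (fun i => ((μ * lr * (P i i).re - c : ℝ) : ℂ))).PosSemidef := by
    apply posSemidef_diagonal_iff.mpr
    intro i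
    exact_mod_cast Complex.zero_le_real.mpr (by linarith [hc_le i])
  -- the key identity
  have E : A ⊙ B - (c : ℂ) • 1
      = A ⊙ (B - (lr : ℂ) • P) + (lr : ℂ) • (A ⊙ P - ((μ : ℝ) : ℂ) •
          ((1 : Matrix (Fin n) (Fin n) ℂ) ⊙ P))
        + diagonal (fun i => ((μ * lr * (P i i).re - c : ℝ) : ℂ)) := by
    ext i j
    simp only [Matrix.sub_apply, Matrix.add_apply, Matrix.smul_apply, Matrix.hadamard_apply,
      Matrix.one_apply, Matrix.diagonal_apply, smul_eq_mul]
    by_cases hij : i = j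
    · subst hij
      obtain ⟨t, ht⟩ : ∃ t : ℝ, P i i = (t : ℂ) := ⟨(P i i).re, (hPherm.coe_re_apply_self i).symm⟩
      rw [ht]
      simp only [if_pos rfl, Complex.ofReal_re]
      push_cast
      ring
    · simp only [if_neg hij]
      push_cast
      ring
  -- assemble
  have hfinal : (A ⊙ B - (c : ℂ) • 1).PosSemidef := by
    rw [E]
    exact ((my_schur hA hBP).add hsmul).add hDrem
  have hmain : c ≤ lambdaMin hAB := le_ciInf fun i => my_eig_ge hAB c hfinal i
  -- rewrite the RHS
  have hrhs : μ / kappaEff hB.1 * binf = c := by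
    show μ / (lambdaMax hH / lambdaMinPos hH) * binf = c
    rw [hc, ← hl1, ← hlr, div_div_eq_mul_div]
  rw [ge_iff_le, hrhs]
  exact hmain
end

section
/- Let n ≥ 2 and let P ∈ M_n be a rank-r orthogonal projection, partitioned as a 2×2 block matrix with upper-left block P₁ ∈ M_{n−1}, upper-right block a column vector x ∈ ℂ^{n−1}, lower-left block x*, and lower-right scalar entry p, with 0 < p < 1. Let Q = P₁ − (1/p) x x*. Then the matrix R = Q + (1/‖x‖²) x x* = Q + (1/(p(1−p))) x x* is an orthogonal projection of rank r. -/
open Matrix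
open scoped Matrix ComplexOrder

-- auxiliary lemma
lemma proj_cast_rank_eq_trace {m : Type*} [Fintype m] [DecidableEq m]
    {A : Matrix m m ℂ} (hA : A.IsHermitian) (hI : A * A = A) :
    (A.rank : ℂ) = A.trace := by
  classical
  have heig : ∀ i, hA.eigenvalues i = 0 ∨ hA.eigenvalues i = 1 := by
    intro i
    have hv := hA.mulVec_eigenvectorBasis i
    have h2 : A *ᵥ (A *ᵥ ⇑(hA.eigenvectorBasis i))
        = (hA.eigenvalues i * hA.eigenvalues i) • ⇑(hA.eigenvectorBasis i) := by
      rw [hv, mulVec_smul, hv, smul_smul]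
    rw [mulVec_mulVec, hI, hv] at h2
    have hvne : ⇑(hA.eigenvectorBasis i) ≠ 0 := by
      intro h
      have := hA.eigenvectorBasis.orthonormal.1 i
      rw [show (hA.eigenvectorBasis i) = 0 from PiLp.ext (congrFun h)] at this
      simp at this
    have h3 : (hA.eigenvalues i * hA.eigenvalues i - hA.eigenvalues i) • ⇑(hA.eigenvectorBasis i) = 0 := by
      rw [sub_smul, h2, sub_self]
    rcases smul_eq_zero.mp h3 with h | h
    · have : hA.eigenvalues i * (hA.eigenvalues i - 1) = 0 := by ring_nf; linarith [h]
      rcases mul_eq_zero.mp this with h | h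
      · exact Or.inl h
      · exact Or.inr (by linarith)
    · exact absurd h hvne
  have htr : A.trace = ∑ i, (hA.eigenvalues i : ℂ) := by
    nth_rewrite 1 [hA.spectral_theorem]
    rw [Unitary.conjStarAlgAut_apply]
    rw [Matrix.trace_mul_cycle,
      (Matrix.mem_unitaryGroup_iff').mp (hA.eigenvectorUnitary).2, Matrix.one_mul,
      Matrix.trace_diagonal]
    rfl
  rw [htr, hA.rank_eq_card_non_zero_eigs]
  rw [Fintype.card_subtype]
  rw [Finset.sum_congr rfl (fun i _ => show (hA.eigenvalues i : ℂ) = if hA.eigenvalues i ≠ 0 then 1 else 0 by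
    rcases heig i with h | h <;> simp [h])]
  simp [Finset.sum_ite]

/-- For a rank-`r` orthogonal projection `P` partitioned with upper-left block `P₁`, border
vector `x` and lower-right entry `p` with `0 < p < 1` and `Q = P₁ - (1/p) x x*`: the matrix
`R = Q + (1/‖x‖²) x x* = Q + (1/(p(1-p))) x x*` is an orthogonal projection of rank `r`. -/
theorem stmt_6 {n r : ℕ} (hn : 2 ≤ n)
    (P₁ : Matrix (Fin (n - 1)) (Fin (n - 1)) ℂ) (x : Fin (n - 1) → ℂ) (p : ℝ)
    (P : Matrix (Fin (n - 1) ⊕ Unit) (Fin (n - 1) ⊕ Unit) ℂ)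
    (hPdef : P = fromBlocks P₁ (replicateCol Unit x) (replicateRow Unit (star x)) (of fun _ _ => (p : ℂ)))
    (hHerm : P.IsHermitian) (hIdem : P * P = P) (hrank : P.rank = r)
    (hp0 : 0 < p) (hp1 : p < 1)
    (Q : Matrix (Fin (n - 1)) (Fin (n - 1)) ℂ)
    (hQdef : Q = P₁ - ((1 / p : ℝ) : ℂ) • vecMulVec x (star x))
    (R : Matrix (Fin (n - 1)) (Fin (n - 1)) ℂ)
    (hRdef : R = Q + ((1 / ∑ i, ‖x i‖ ^ 2 : ℝ) : ℂ) • vecMulVec x (star x)) :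
    R = Q + ((1 / (p * (1 - p)) : ℝ) : ℂ) • vecMulVec x (star x) ∧
      R.IsHermitian ∧ R * R = R ∧ R.rank = r := by
  classical
  have hp0r : p ≠ 0 := hp0.ne'
  have hp1r : (1 : ℝ) - p ≠ 0 := by linarith
  have hp0' : (p : ℂ) ≠ 0 := by exact_mod_cast hp0r
  have hp1' : ((1 : ℂ) - p) ≠ 0 := by
    intro h
    have : (1 : ℝ) - p = 0 := by exact_mod_cast congrArg Complex.re h
    linarith
  set C : Matrix (Fin (n - 1)) Unit ℂ := replicateCol Unit x with hC
  set Rw : Matrix Unit (Fin (n - 1)) ℂ := replicateRow Unit (star x) with hRw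
  set E : Matrix Unit Unit ℂ := of fun _ _ => (p : ℂ) with hEdef
  have hE : E = (p : ℂ) • (1 : Matrix Unit Unit ℂ) := by
    ext i j
    simp [hEdef, Matrix.one_apply, Subsingleton.elim i j]
  have hmul := hIdem
  rw [hPdef, fromBlocks_multiply, fromBlocks_inj] at hmul
  obtain ⟨e11, e12, e21, e22⟩ := hmul
  have hh : Pᴴ = P := hHerm
  rw [hPdef, fromBlocks_conjTranspose, fromBlocks_inj] at hh
  have hP1H : P₁ᴴ = P₁ := hh.1
  rw [hE] at e12 e21 e22
  rw [Matrix.mul_smul, Matrix.mul_one] at e12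
  rw [Matrix.smul_mul, Matrix.one_mul] at e21
  simp only [Matrix.smul_mul, Matrix.one_mul] at e22
  have hPC' : P₁ * C = ((1 : ℂ) - p) • C := by
    rw [sub_smul, one_smul, eq_sub_iff_add_eq, e12]
  have hRwP : Rw * P₁ = ((1 : ℂ) - p) • Rw := by
    rw [sub_smul, one_smul, eq_sub_iff_add_eq, e21]
  have hRwC : Rw * C = ((p : ℂ) - p ^ 2) • (1 : Matrix Unit Unit ℂ) := by
    have h : Rw * C = (p : ℂ) • (1 : Matrix Unit Unit ℂ) - (p:ℂ) • ((p:ℂ) • (1 : Matrix Unit Unit ℂ)) := by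
      rw [eq_sub_iff_add_eq, e22]
    rw [h, smul_smul, ← sub_smul]
    ring_nf
  set S : Matrix (Fin (n - 1)) (Fin (n - 1)) ℂ := vecMulVec x (star x) with hSdef
  have hS : S = C * Rw := vecMulVec_eq Unit x (star x)
  have e11' : P₁ * P₁ = P₁ - S := by rw [eq_sub_iff_add_eq, hS, e11]
  -- scalar equation
  have key : (∑ i, star (x i) * x i) = (p : ℂ) - p ^ 2 := by
    have h0 := Matrix.ext_iff.2 hRwC () ()
    simpa [Matrix.mul_apply, hRw, hC, Matrix.one_apply] using h0
  have hsum : (∑ i, ‖x i‖ ^ 2 : ℝ) = p - p ^ 2 := by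
    have : ((∑ i, ‖x i‖ ^ 2 : ℝ) : ℂ) = ((p - p ^ 2 : ℝ) : ℂ) := by
      push_cast
      rw [← key]
      refine Finset.sum_congr rfl fun i _ => ?_
      rw [RCLike.star_def, RCLike.conj_mul]
      norm_num
    exact_mod_cast this
  have hsum' : (∑ i, ‖x i‖ ^ 2 : ℝ) = p * (1 - p) := by rw [hsum]; ring
  have hfirst : R = Q + ((1 / (p * (1 - p)) : ℝ) : ℂ) • S := by rw [hRdef, hsum']
  set c : ℂ := ((1 / (1 - p) : ℝ) : ℂ) with hcdef
  have hc : c = 1 / ((1 : ℂ) - p) := by rw [hcdef]; push_cast; ring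
  have hkey : c * ((1:ℂ) - p) = 1 := by rw [hc]; field_simp
  have hR' : R = P₁ + c • S := by
    rw [hfirst, hQdef, sub_add_eq_add_sub, add_sub_assoc, ← sub_smul]
    congr 1
    have hre : (1 / (p * (1 - p)) : ℝ) - 1 / p = 1 / (1 - p) := by field_simp; ring
    rw [hcdef, ← Complex.ofReal_sub, hre]
  -- products
  have hP1S : P₁ * S = ((1:ℂ) - p) • S := by
    rw [hS, ← Matrix.mul_assoc, hPC', Matrix.smul_mul]
  have hSP1 : S * P₁ = ((1:ℂ) - p) • S := by
    rw [hS, Matrix.mul_assoc, hRwP, Matrix.mul_smul]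
  have hSS : S * S = ((p:ℂ) - p ^ 2) • S := by
    rw [hS, Matrix.mul_assoc, ← Matrix.mul_assoc Rw C Rw, hRwC, Matrix.smul_mul,
      Matrix.one_mul, Matrix.mul_smul]
  -- hermitian
  have hSH : Sᴴ = S := by
    ext i j
    simp [hSdef, Matrix.conjTranspose_apply, vecMulVec_apply, mul_comm]
  have hRHerm : R.IsHermitian := by
    show Rᴴ = R
    rw [hR', conjTranspose_add, conjTranspose_smul, hP1H, hSH, hcdef]
    congr 1
    simp [Complex.star_def, Complex.conj_ofReal]
  -- idempotent
  have hRidem : R * R = R := by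
    rw [hR']
    simp only [add_mul, mul_add, Matrix.smul_mul, Matrix.mul_smul, smul_smul, add_assoc]
    rw [e11', hP1S, hSP1, hSS, smul_smul, smul_smul, ← add_smul, ← add_smul,
      sub_eq_add_neg, ← neg_one_smul ℂ S, add_assoc, ← add_smul]
    congr 2
    linear_combination (1 + c * (p : ℂ)) * hkey
  refine ⟨hfirst, hRHerm, hRidem, ?_⟩
  have hRrank : (R.rank : ℂ) = R.trace := proj_cast_rank_eq_trace hRHerm hRidem
  have hPrank : (P.rank : ℂ) = P.trace := proj_cast_rank_eq_trace hHerm hIdem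
  have htrS : S.trace = (p : ℂ) - p ^ 2 := by
    rw [← key]
    simp [hSdef, Matrix.trace, Matrix.diag, vecMulVec_apply, mul_comm]
  have htrP : P.trace = P₁.trace + (p : ℂ) := by
    rw [hPdef]
    simp [Matrix.trace, Matrix.diag, Fintype.sum_sum_type, Matrix.fromBlocks_apply₁₁,
      Matrix.fromBlocks_apply₂₂, hEdef]
  have htrR : R.trace = P₁.trace + (p : ℂ) := by
    rw [hR', trace_add, trace_smul, htrS]
    congr 1
    rw [smul_eq_mul]
    linear_combination (p : ℂ) * hkey
  have hfin : (R.rank : ℂ) = (r : ℂ) := by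
    rw [hRrank, htrR, ← htrP, ← hPrank, hrank]
  exact_mod_cast hfin
end

section
/- Let C ∈ M_n be a Hermitian complex matrix and let P ∈ M_n be a rank-r orthogonal projection with 1 ≤ r ≤ n. If every principal submatrix of C of order n − r + 1 is positive semidefinite, then the Hadamard product C ∘ P is positive semidefinite. -/
open Matrix
open scoped Matrix ComplexOrder

open Finset

section Aux

private lemma sum_range_zero' {m n : ℕ} {f : Fin m → Fin n} (hf : Function.Injective f)
    (g : Fin n → ℂ) (hg : ∀ l, l ∉ Set.range f → g l = 0) :
    ∑ l, g l = ∑ a, g (f a) := by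
  rw [← Finset.sum_image (fun a _ b _ h => hf h)]
  symm
  apply Finset.sum_subset (Finset.subset_univ _)
  intro l _ hl
  refine hg l ?_
  rintro ⟨a, rfl⟩
  exact hl (Finset.mem_image.mpr ⟨a, Finset.mem_univ _, rfl⟩)

private lemma dot_restrict {m n : ℕ} (C : Matrix (Fin n) (Fin n) ℂ) (f : Fin m → Fin n)
    (hf : Function.Injective f) (y : Fin n → ℂ) (hy : ∀ l, l ∉ Set.range f → y l = 0) :
    star y ⬝ᵥ C *ᵥ y = star (y ∘ f) ⬝ᵥ (C.submatrix f f) *ᵥ (y ∘ f) := by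
  have h2 : ∀ l, (∑ l', C l l' * y l') = ∑ b, C l (f b) * y (f b) :=
    fun l => sum_range_zero' hf _ (fun l' h => by simp [hy l' h])
  have h3 : (∑ l, star (y l) * ∑ l', C l l' * y l')
      = ∑ a, star (y (f a)) * ∑ l', C (f a) l' * y l' :=
    sum_range_zero' hf _ (fun l h => by simp [hy l h])
  simp only [dotProduct, mulVec, Pi.star_apply, Function.comp_apply, submatrix_apply]
  rw [h3]
  exact Finset.sum_congr rfl fun a _ => by rw [h2 (f a)]

end Aux


private lemma cb1 {ι N : Type*} [Fintype ι] [DecidableEq ι] [Fintype N] [DecidableEq N]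
    (F : Matrix ι N ℂ) (G : Matrix N ι ℂ) :
    det (F * G) = ∑ p : ι → N, (∏ x, G (p x) x) * det (F.submatrix id p) := by
  simp only [det_apply', mul_apply, Finset.prod_univ_sum, Finset.mul_sum,
    Fintype.piFinset_univ, submatrix_apply, id_eq]
  rw [Finset.sum_comm]
  refine Finset.sum_congr rfl fun p _ => ?_
  refine Finset.sum_congr rfl fun σ _ => ?_
  rw [Finset.prod_mul_distrib]
  ring

private lemma cb2 {ι N : Type*} [Fintype ι] [DecidableEq ι] [Fintype N] [DecidableEq N]
    (F : Matrix ι N ℂ) (G : Matrix N ι ℂ) :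
    ∑ p : ι → N, det (F.submatrix id p) * det (G.submatrix p id)
      = (Nat.factorial (Fintype.card ι) : ℂ) * det (F * G) := by
  have step1 : ∀ p : ι → N, det (G.submatrix p id)
      = ∑ τ : Equiv.Perm ι, (Equiv.Perm.sign τ : ℤ) * ∏ x, G (p (τ x)) x := by
    intro p
    simp [det_apply', submatrix_apply]
  calc ∑ p : ι → N, det (F.submatrix id p) * det (G.submatrix p id)
      = ∑ τ : Equiv.Perm ι, ∑ p : ι → N,
          det (F.submatrix id p) * (((Equiv.Perm.sign τ : ℤ) : ℂ) * ∏ x, G (p (τ x)) x) := by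
        simp_rw [step1, Finset.mul_sum]
        rw [Finset.sum_comm]
    _ = ∑ τ : Equiv.Perm ι, ∑ q : ι → N, (∏ x, G (q x) x) * det (F.submatrix id q) := by
        refine Finset.sum_congr rfl fun τ _ => ?_
        refine Fintype.sum_equiv (Equiv.arrowCongr τ.symm (Equiv.refl N)) _ _ fun q => ?_
        have hsub : F.submatrix id ((Equiv.arrowCongr τ.symm (Equiv.refl N)) q)
            = (F.submatrix id q).submatrix id ⇑τ := rfl
        have hdet : det (F.submatrix id ((Equiv.arrowCongr τ.symm (Equiv.refl N)) q))
            = ((Equiv.Perm.sign τ : ℤ) : ℂ) * det (F.submatrix id q) := by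
          rw [hsub, det_permute']
        rw [hdet]
        have hprod : ∀ x : ι, G ((Equiv.arrowCongr τ.symm (Equiv.refl N)) q x) x
            = G (q (τ x)) x := by
          intro x; simp
        rw [Finset.prod_congr rfl fun x _ => hprod x]
        ring
    _ = (Nat.factorial (Fintype.card ι) : ℂ) * det (F * G) := by
        rw [Finset.sum_const]
        rw [← cb1]
        simp [Fintype.card_perm, nsmul_eq_mul]


private def bR {d n : ℕ} (A : Matrix (Fin d) (Fin n) ℂ) (u : Fin n → ℂ) :
    Matrix (Fin d ⊕ Fin 1) (Fin n) ℂ :=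
  Matrix.of (Sum.elim A fun _ => u)

private lemma bR_inl {d n : ℕ} (A : Matrix (Fin d) (Fin n) ℂ) (u : Fin n → ℂ) (k : Fin d)
    (l : Fin n) : bR A u (Sum.inl k) l = A k l := rfl

private lemma bR_inr {d n : ℕ} (A : Matrix (Fin d) (Fin n) ℂ) (u : Fin n → ℂ) (k : Fin 1)
    (l : Fin n) : bR A u (Sum.inr k) l = u l := rfl

private def bC {d n : ℕ} (A : Matrix (Fin d) (Fin n) ℂ) (v : Fin n → ℂ) :
    Matrix (Fin n) (Fin d ⊕ Fin 1) ℂ :=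
  Matrix.of fun l => Sum.elim (fun k => star (A k l)) (fun _ => v l)

private lemma blockdet {d n : ℕ} (A : Matrix (Fin d) (Fin n) ℂ) (hAA : A * Aᴴ = 1)
    (i j : Fin n) :
    det (bR A (Pi.single i 1) * bC A (Pi.single j 1)) = ((1 - Aᴴ * A : Matrix (Fin n) (Fin n) ℂ)) i j := by
  have hblock : bR A (Pi.single i 1) * bC A (Pi.single j 1)
      = fromBlocks 1 (Matrix.of fun k (_ : Fin 1) => A k j)
          (Matrix.of fun (_ : Fin 1) k => star (A k i))
          (Matrix.of fun (_ _ : Fin 1) => (1 : Matrix (Fin n) (Fin n) ℂ) i j) := by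
    ext x y
    cases x with
    | inl k =>
      cases y with
      | inl k' =>
        have h1 : (A * Aᴴ) k k' = ∑ l, A k l * star (A k' l) := by
          simp [Matrix.mul_apply, Matrix.conjTranspose_apply]
        have h2 := congrFun (congrFun hAA k) k'
        rw [h1] at h2
        simpa [bR_inl, bC, Matrix.mul_apply, fromBlocks] using h2
      | inr _ =>
        simp [bR_inl, bR_inr, bC, Matrix.mul_apply, fromBlocks, Pi.single_apply, mul_ite]
    | inr x =>
      cases y with
      | inl k' =>
        simp [bR_inl, bR_inr, bC, Matrix.mul_apply, fromBlocks, Pi.single_apply, ite_mul]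
      | inr _ =>
        simp [bR_inl, bR_inr, bC, Matrix.mul_apply, fromBlocks, Pi.single_apply, ite_mul,
          Matrix.one_apply, eq_comm]
  rw [hblock, det_fromBlocks_one₁₁, det_fin_one]
  simp [Matrix.sub_apply, Matrix.mul_apply, Matrix.conjTranspose_apply]

private noncomputable def gdet {d n : ℕ} (A : Matrix (Fin d) (Fin n) ℂ)
    (p : Fin d ⊕ Fin 1 → Fin n) (i : Fin n) : ℂ :=
  det ((bR A (Pi.single i 1)).submatrix id p)

private lemma gdet_support {d n : ℕ} (A : Matrix (Fin d) (Fin n) ℂ)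
    (p : Fin d ⊕ Fin 1 → Fin n) (i : Fin n) (hi : i ∉ Set.range p) :
    gdet A p i = 0 := by
  apply det_eq_zero_of_row_eq_zero (Sum.inr 0)
  intro y
  have : p y ≠ i := fun h => hi ⟨y, h⟩
  simp [gdet, bR_inr, Pi.single_apply, this]

private lemma gdet_noninj {d n : ℕ} (A : Matrix (Fin d) (Fin n) ℂ)
    (p : Fin d ⊕ Fin 1 → Fin n) (i : Fin n) (hp : ¬ Function.Injective p) :
    gdet A p i = 0 := by
  simp only [Function.Injective, not_forall] at hp
  obtain ⟨x, y, hxy, hne⟩ := hp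
  exact det_zero_of_column_eq hne (fun k => by simp [bR, submatrix_apply, hxy])

private lemma conj_gdet {d n : ℕ} (A : Matrix (Fin d) (Fin n) ℂ)
    (p : Fin d ⊕ Fin 1 → Fin n) (j : Fin n) :
    star (gdet A p j) = det ((bC A (Pi.single j 1)).submatrix p id) := by
  have h1 : (star (gdet A p j) : ℂ)
      = det (((bR A (Pi.single j 1)).submatrix id p).map (starRingEnd ℂ)) :=
    RingHom.map_det (starRingEnd ℂ) _
  rw [h1, ← det_transpose]
  congr 1
  ext x y
  cases y with
  | inl k => simp [bR_inl, bC]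
  | inr _ => simp [bR_inr, bC, Pi.single_apply, apply_ite (starRingEnd ℂ)]


private lemma keyident {d n : ℕ} (A : Matrix (Fin d) (Fin n) ℂ) (hAA : A * Aᴴ = 1)
    (i j : Fin n) :
    ∑ p : Fin d ⊕ Fin 1 → Fin n, gdet A p i * star (gdet A p j)
      = (Nat.factorial (d + 1) : ℂ) * ((1 - Aᴴ * A : Matrix (Fin n) (Fin n) ℂ)) i j := by
  have h1 : ∀ p : Fin d ⊕ Fin 1 → Fin n, gdet A p i * star (gdet A p j)
      = det ((bR A (Pi.single i 1)).submatrix id p)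
        * det ((bC A (Pi.single j 1)).submatrix p id) := by
    intro p; rw [conj_gdet]; rfl
  simp_rw [h1]
  rw [cb2, blockdet A hAA]
  congr 2
  simp


private lemma exists_factor {n r : ℕ} (P : Matrix (Fin n) (Fin n) ℂ)
    (hP : P.IsHermitian) (hP2 : P * P = P) (hPr : P.rank = r) (hrn : r ≤ n) :
    ∃ A : Matrix (Fin (n - r)) (Fin n) ℂ, A * Aᴴ = 1 ∧ Aᴴ * A = 1 - P := by
  classical
  set K : Matrix (Fin n) (Fin n) ℂ := 1 - P with hKdef
  have hK : K.IsHermitian := by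
    rw [hKdef, Matrix.IsHermitian, conjTranspose_sub, conjTranspose_one, hP]
  have hK2 : K * K = K := by
    simp only [hKdef, sub_mul, mul_sub, mul_one, one_mul, hP2]
    abel
  have hPK : P * K = 0 := by
    rw [hKdef, mul_sub, mul_one, hP2, sub_self]
  have hrange : LinearMap.range K.mulVecLin = LinearMap.ker P.mulVecLin := by
    ext y
    constructor
    · rintro ⟨x, rfl⟩
      simp only [LinearMap.mem_ker, mulVecLin_apply, mulVec_mulVec, hPK, zero_mulVec]
    · intro hy
      simp only [LinearMap.mem_ker, mulVecLin_apply] at hy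
      exact ⟨y, by simp [hKdef, sub_mulVec, hy]⟩
  have hKrank : K.rank = n - r := by
    have h1 := LinearMap.finrank_range_add_finrank_ker P.mulVecLin
    have h2 : Module.finrank ℂ (Fin n → ℂ) = n := by simp
    rw [h2] at h1
    have h3 : Module.finrank ℂ (LinearMap.range P.mulVecLin) = r := hPr
    rw [Matrix.rank, hrange]
    omega
  -- spectral theorem
  have hspec := hK.spectral_theorem
  rw [Unitary.conjStarAlgAut_apply] at hspec
  set U : Matrix (Fin n) (Fin n) ℂ := (Matrix.IsHermitian.eigenvectorUnitary hK : Matrix (Fin n) (Fin n) ℂ) with hU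
  set ev : Fin n → ℝ := hK.eigenvalues with hev
  have hmem := (Matrix.IsHermitian.eigenvectorUnitary hK).2
  rw [Unitary.mem_iff] at hmem
  obtain ⟨hsU, hUs⟩ := hmem
  rw [← hU] at hsU hUs
  set D : Matrix (Fin n) (Fin n) ℂ := diagonal (RCLike.ofReal ∘ ev) with hD
  have cancel : ∀ X : Matrix (Fin n) (Fin n) ℂ, star U * (U * X) = X := by
    intro X; rw [← mul_assoc, hsU, one_mul]
  have hDD : D * D = D := by
    have e1 : (U * D * star U) * (U * D * star U) = U * D * star U := by
      rw [← hspec]; exact hK2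
    have e3 := congrArg (fun M => star U * M * U) e1
    simp only [Matrix.mul_assoc] at e3
    simpa [cancel, hsU, Matrix.mul_one] using e3
  have heig : ∀ t, ev t = 0 ∨ ev t = 1 := by
    intro t
    have h4 : ((ev t : ℂ) * (ev t : ℂ)) = (ev t : ℂ) := by
      have := congrFun (congrFun hDD t) t
      simpa [hD, Matrix.mul_apply, diagonal_apply] using this
    have h5 : ev t * ev t = ev t := by exact_mod_cast h4
    have h6 : ev t * (ev t - 1) = 0 := by ring_nf; linear_combination h5
    rcases mul_eq_zero.mp h6 with h | h
    · exact Or.inl h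
    · exact Or.inr (by linarith)
  have hcard : Fintype.card {i // ev i ≠ 0} = n - r := by
    rw [← hK.rank_eq_card_non_zero_eigs, hKrank]
  set σ : Fin (n - r) ≃ {i // ev i ≠ 0} := (Fintype.equivFinOfCardEq hcard).symm with hσ
  refine ⟨Matrix.of fun k l => star (U l (σ k).1), ?_, ?_⟩
  · ext k k'
    have : (Matrix.of (fun k l => star (U l (σ k).1)) *
        (Matrix.of fun k l => star (U l (σ k).1))ᴴ) k k' = (star U * U) (σ k).1 (σ k').1 := by
      simp [Matrix.mul_apply, Matrix.conjTranspose_apply]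
    rw [this, hsU]
    by_cases h : k = k'
    · subst h; simp [Matrix.one_apply]
    · have h2 : (σ k).1 ≠ (σ k').1 := by
        intro hc
        exact h (σ.injective (Subtype.ext hc))
      simp [Matrix.one_apply, h, h2]
  · have hKP : K = 1 - P := hKdef
    rw [← hKP.symm] at *
    ext i j
    have lhs : ((Matrix.of fun k l => star (U l (σ k).1))ᴴ *
        (Matrix.of fun k l => star (U l (σ k).1))) i j
        = ∑ k, U i (σ k).1 * star (U j (σ k).1) := by
      simp [Matrix.mul_apply, Matrix.conjTranspose_apply]
    have rhs : K i j = ∑ t, U i t * (ev t : ℂ) * star (U j t) := by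
      conv_lhs => rw [hspec, Matrix.mul_apply]
      simp only [Matrix.mul_diagonal, Matrix.conjTranspose_apply, hD, Function.comp]
      rfl
    rw [lhs, ← hKdef, rhs]
    have himg : Finset.univ.image (fun k => (σ k).1)
        = Finset.univ.filter (fun t => ev t ≠ 0) := by
      ext t
      simp only [Finset.mem_image, Finset.mem_filter, Finset.mem_univ, true_and]
      constructor
      · rintro ⟨k, rfl⟩; exact (σ k).2
      · intro h; exact ⟨σ.symm ⟨t, h⟩, by simp⟩
    have step12 : ∑ k, U i (σ k).1 * star (U j (σ k).1)
        = ∑ t ∈ Finset.univ.filter (fun t => ev t ≠ 0), U i t * star (U j t) := by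
      rw [← himg, Finset.sum_image (fun a _ b _ h => σ.injective (Subtype.ext h))]
    have step3 : ∑ t, U i t * (ev t : ℂ) * star (U j t)
        = ∑ t ∈ Finset.univ.filter (fun t => ev t ≠ 0), U i t * (ev t : ℂ) * star (U j t) := by
      symm
      apply Finset.sum_subset (Finset.filter_subset _ _)
      intro t _ ht
      simp only [Finset.mem_filter, Finset.mem_univ, true_and, not_not] at ht
      simp [ht]
    have step4 : ∑ t ∈ Finset.univ.filter (fun t => ev t ≠ 0), U i t * (ev t : ℂ) * star (U j t)
        = ∑ t ∈ Finset.univ.filter (fun t => ev t ≠ 0), U i t * star (U j t) := by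
      apply Finset.sum_congr rfl
      intro t ht
      simp only [Finset.mem_filter, Finset.mem_univ, true_and] at ht
      rcases heig t with h | h
      · exact absurd h ht
      · rw [h]; simp
    rw [step12, step3, step4]


/-- Let `C` be Hermitian and `P` a rank-`r` orthogonal projection with `1 ≤ r ≤ n`. If every
principal submatrix of `C` of order `n - r + 1` is positive semidefinite, then `C ⊙ P` is
positive semidefinite. -/
theorem stmt_7 {n : ℕ} (C P : Matrix (Fin n) (Fin n) ℂ) (hC : C.IsHermitian)
    (r : ℕ) (hr1 : 1 ≤ r) (hrn : r ≤ n)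
    (hP : P.IsHermitian) (hP2 : P * P = P) (hPr : P.rank = r)
    (hsub : ∀ f : Fin (n - r + 1) → Fin n, Function.Injective f →
      (C.submatrix f f).PosSemidef) :
    (C ⊙ P).PosSemidef := by
  classical
  obtain ⟨A, hAA, hA2⟩ := exists_factor P hP hP2 hPr hrn
  have h1AP : (1 - Aᴴ * A : Matrix (Fin n) (Fin n) ℂ) = P := by
    rw [hA2, sub_sub_cancel]
  have hPdecomp : ∀ i j : Fin n, (Nat.factorial (n - r + 1) : ℂ) * P i j
      = ∑ p : Fin (n - r) ⊕ Fin 1 → Fin n, gdet A p i * star (gdet A p j) := by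
    intro i j
    rw [keyident A hAA i j, h1AP]
  refine PosSemidef.of_dotProduct_mulVec_nonneg ?_ ?_
  · -- Hermitian
    ext i j
    have hCij := congrFun (congrFun hC i) j
    have hPij := congrFun (congrFun hP i) j
    simp only [conjTranspose_apply] at hCij hPij ⊢
    simp only [hadamard_apply, star_mul']
    rw [hCij, hPij]
  · intro z
    set y : ((Fin (n - r) ⊕ Fin 1) → Fin n) → Fin n → ℂ :=
      fun p l => star (gdet A p l) * z l with hy
    have expand : (Nat.factorial (n - r + 1) : ℂ) * (star z ⬝ᵥ (C ⊙ P) *ᵥ z)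
        = ∑ p : (Fin (n - r) ⊕ Fin 1) → Fin n, star (y p) ⬝ᵥ C *ᵥ (y p) := by
      have lhs1 : (Nat.factorial (n - r + 1) : ℂ) * (star z ⬝ᵥ (C ⊙ P) *ᵥ z)
          = ∑ i, ∑ j, (star (z i) * C i j * z j) * ((Nat.factorial (n - r + 1) : ℂ) * P i j) := by
        simp only [dotProduct, mulVec, hadamard_apply, Pi.star_apply, Finset.mul_sum]
        refine Finset.sum_congr rfl fun i _ => Finset.sum_congr rfl fun j _ => by ring
      rw [lhs1]
      simp_rw [hPdecomp, Finset.mul_sum]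
      calc ∑ i, ∑ j, ∑ p : (Fin (n - r) ⊕ Fin 1) → Fin n,
              (star (z i) * C i j * z j) * (gdet A p i * star (gdet A p j))
          = ∑ i, ∑ p : (Fin (n - r) ⊕ Fin 1) → Fin n, ∑ j,
              (star (z i) * C i j * z j) * (gdet A p i * star (gdet A p j)) :=
            Finset.sum_congr rfl fun i _ => Finset.sum_comm
        _ = ∑ p : (Fin (n - r) ⊕ Fin 1) → Fin n, ∑ i, ∑ j,
              (star (z i) * C i j * z j) * (gdet A p i * star (gdet A p j)) :=
            Finset.sum_comm
        _ = ∑ p : (Fin (n - r) ⊕ Fin 1) → Fin n, star (y p) ⬝ᵥ C *ᵥ (y p) := by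
            refine Finset.sum_congr rfl fun p _ => ?_
            simp only [dotProduct, mulVec, Pi.star_apply, Finset.mul_sum, hy, star_mul',
              star_star]
            exact Finset.sum_congr rfl fun i _ => Finset.sum_congr rfl fun j _ => by ring
    have nonneg : ∀ p : (Fin (n - r) ⊕ Fin 1) → Fin n, 0 ≤ star (y p) ⬝ᵥ C *ᵥ (y p) := by
      intro p
      by_cases hp : Function.Injective p
      · have e : Fin (n - r) ⊕ Fin 1 ≃ Fin (n - r + 1) := finSumFinEquiv
        set f : Fin (n - r + 1) → Fin n := p ∘ e.symm with hf
        have hfinj : Function.Injective f := hp.comp e.symm.injective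
        have hyz : ∀ l, l ∉ Set.range f → y p l = 0 := by
          intro l hl
          have hlp : l ∉ Set.range p := by
            rintro ⟨x, rfl⟩
            exact hl ⟨e x, by simp [hf]⟩
          show star (gdet A p l) * z l = 0
          rw [gdet_support A p l hlp, star_zero, zero_mul]
        rw [dot_restrict C f hfinj _ hyz]
        exact (hsub f hfinj).dotProduct_mulVec_nonneg _
      · have hzero : y p = 0 := by
          funext l
          show star (gdet A p l) * z l = 0
          rw [gdet_noninj A p l hp, star_zero, zero_mul]
        rw [hzero]
        simp
    have hfin : (0:ℂ) ≤ (Nat.factorial (n - r + 1) : ℂ) * (star z ⬝ᵥ (C ⊙ P) *ᵥ z) := by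
      rw [expand]
      exact Finset.sum_nonneg fun p _ => nonneg p
    have hcr : (0:ℝ) < (Nat.factorial (n - r + 1) : ℝ) := by
      exact_mod_cast Nat.factorial_pos _
    have h1 : (0:ℂ) ≤ (((Nat.factorial (n - r + 1) : ℝ)⁻¹ : ℝ) : ℂ) := by
      rw [Complex.zero_le_real]; positivity
    have hcast : ((Nat.factorial (n - r + 1) : ℝ) : ℂ) = (Nat.factorial (n - r + 1) : ℂ) := by
      push_cast; ring
    have := mul_nonneg h1 hfin
    rw [← hcast, ← mul_assoc, ← Complex.ofReal_mul, inv_mul_cancel₀ (ne_of_gt hcr)] at this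
    simpa using this
end

section
/- Let A, B = [b_ij] be n×n complex positive semidefinite matrices with r = rank(B) ≥ 1. Then λ_min(A ∘ B) ≥ (μ_{n−r+1}(A)/κ_eff(B)) · min_{1≤i≤n} b_ii. -/
open Matrix
open scoped Matrix ComplexOrder

namespace HadamardAux

open Complex Finset

/-- The square matrix whose row `0` is `v` and whose row `i.succ` is row `g i` of `W`. -/
noncomputable def rowMat {n s : ℕ} (W : Matrix (Fin n) (Fin (s+1)) ℂ) (g : Fin s → Fin n)
    (v : Fin (s+1) → ℂ) : Matrix (Fin (s+1)) (Fin (s+1)) ℂ :=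
  Matrix.of (Fin.cons v (fun i => W (g i)))

/-- Generalized cofactor. -/
noncomputable def cg {n s : ℕ} (W : Matrix (Fin n) (Fin (s+1)) ℂ) (g : Fin s → Fin n)
    (j : Fin (s+1)) : ℂ := (rowMat W g (Pi.single j 1)).det

/-- The sparse frame vector attached to `g`. -/
noncomputable def zg {n s : ℕ} (W : Matrix (Fin n) (Fin (s+1)) ℂ) (g : Fin s → Fin n)
    (p : Fin n) : ℂ := ∑ j, W p j * cg W g j

lemma rowMat_eq_updateRow {n s : ℕ} (W : Matrix (Fin n) (Fin (s+1)) ℂ) (g : Fin s → Fin n)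
    (v : Fin (s+1) → ℂ) : rowMat W g v = (rowMat W g 0).updateRow 0 v := by
  ext p q
  refine Fin.cases ?_ (fun i => ?_) p <;>
    simp [rowMat, Matrix.updateRow_apply, Fin.succ_ne_zero]

lemma det_rows {t : ℕ} (M : Matrix (Fin t) (Fin t) ℂ) :
    M.det = ∑ σ : Equiv.Perm (Fin t), ((Equiv.Perm.sign σ : ℤ) : ℂ) * ∏ p, M p (σ p) := by
  rw [← Matrix.det_transpose, Matrix.det_apply']
  simp [Matrix.transpose_apply]

lemma det_updateRow_sum' {t : ℕ} (M : Matrix (Fin t) (Fin t) ℂ) (r0 : Fin t)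
    (c : Fin t → ℂ) (v : Fin t → Fin t → ℂ) :
    (M.updateRow r0 (∑ j, c j • v j)).det = ∑ j, c j * (M.updateRow r0 (v j)).det := by
  classical
  have H : ∀ f : Finset (Fin t),
      (M.updateRow r0 (∑ j ∈ f, c j • v j)).det = ∑ j ∈ f, c j * (M.updateRow r0 (v j)).det := by
    intro f
    induction f using Finset.induction_on with
    | empty =>
        simp only [Finset.sum_empty]
        exact Matrix.det_eq_zero_of_row_eq_zero r0 (fun j => by simp [Matrix.updateRow_self])
    | insert a f' hx ih =>
        rw [Finset.sum_insert hx, Matrix.det_updateRow_add, Matrix.det_updateRow_smul,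
          Finset.sum_insert hx, ih]
  exact H Finset.univ

lemma rowMat_zero {n s : ℕ} (W : Matrix (Fin n) (Fin (s+1)) ℂ) (g : Fin s → Fin n)
    (v : Fin (s+1) → ℂ) : rowMat W g v 0 = v := by
  have h : rowMat W g v 0 = (Fin.cons v (fun i => W (g i)) : Fin (s+1) → Fin (s+1) → ℂ) 0 := rfl
  rw [h, Fin.cons_zero]

lemma rowMat_succ {n s : ℕ} (W : Matrix (Fin n) (Fin (s+1)) ℂ) (g : Fin s → Fin n)
    (v : Fin (s+1) → ℂ) (i : Fin s) : rowMat W g v i.succ = W (g i) := by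
  have h : rowMat W g v i.succ
      = (Fin.cons v (fun i' => W (g i')) : Fin (s+1) → Fin (s+1) → ℂ) i.succ := rfl
  rw [h, Fin.cons_succ]

lemma zg_eq_det {n s : ℕ} (W : Matrix (Fin n) (Fin (s+1)) ℂ) (g : Fin s → Fin n) (p : Fin n) :
    zg W g p = (rowMat W g (W p)).det := by
  have hWp : W p = ∑ j, W p j • (Pi.single j 1 : Fin (s+1) → ℂ) := by
    funext q
    rw [Finset.sum_apply]
    have h1 : ∀ j : Fin (s+1), (W p j • (Pi.single j 1 : Fin (s+1) → ℂ)) q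
        = if q = j then W p j else 0 := by
      intro j
      by_cases h : q = j <;> simp [Pi.single_apply, h]
    rw [Finset.sum_congr rfl (fun j _ => h1 j), Finset.sum_ite_eq]
    simp
  calc zg W g p = ∑ j, W p j * ((rowMat W g 0).updateRow 0 (Pi.single j 1)).det := by
        rw [zg]
        refine Finset.sum_congr rfl fun j _ => ?_
        rw [cg, rowMat_eq_updateRow]
    _ = ((rowMat W g 0).updateRow 0 (∑ j, W p j • (Pi.single j 1 : Fin (s+1) → ℂ))).det :=
        (det_updateRow_sum' _ 0 _ _).symm
    _ = (rowMat W g (W p)).det := by rw [← hWp, ← rowMat_eq_updateRow]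

lemma zg_apply_mem {n s : ℕ} (W : Matrix (Fin n) (Fin (s+1)) ℂ) (g : Fin s → Fin n) (i : Fin s) :
    zg W g (g i) = 0 := by
  rw [zg_eq_det]
  refine Matrix.det_zero_of_row_eq (Fin.succ_ne_zero i).symm ?_
  rw [rowMat_zero, rowMat_succ]

lemma cg_noninj {n s : ℕ} (W : Matrix (Fin n) (Fin (s+1)) ℂ) {g : Fin s → Fin n}
    (hg : ¬ Function.Injective g) (j : Fin (s+1)) : cg W g j = 0 := by
  simp only [Function.Injective, not_forall] at hg
  obtain ⟨i, i', hii, hne⟩ := hg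
  refine Matrix.det_zero_of_row_eq (i := i.succ) (j := i'.succ) ?_ ?_
  · simpa [Fin.succ_inj] using hne
  · rw [rowMat_succ, rowMat_succ, hii]

lemma succ_agree {s : ℕ} {σ τ : Equiv.Perm (Fin (s+1))}
    (h : ∀ i : Fin s, τ i.succ = σ i.succ) : τ = σ := by
  have h0 : τ 0 = σ 0 := by
    have h1 : σ (σ.symm (τ 0)) = τ 0 := σ.apply_symm_apply _
    rcases Fin.eq_zero_or_eq_succ (σ.symm (τ 0)) with hz | ⟨i, hi⟩
    · rw [hz] at h1
      exact h1.symm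
    · exfalso
      rw [hi] at h1
      rw [← h i] at h1
      have := τ.injective h1
      exact (Fin.succ_ne_zero i) this
  refine Equiv.ext fun p => ?_
  refine Fin.cases h0 (fun i => h i) p

lemma card_perm_fix {s : ℕ} (j : Fin (s+1)) :
    (Finset.univ.filter (fun σ : Equiv.Perm (Fin (s+1)) => σ 0 = j)).card
      = (Finset.univ.filter (fun σ : Equiv.Perm (Fin (s+1)) => σ 0 = 0)).card := by
  classical
  refine Finset.card_bij' (fun σ _ => σ.trans (Equiv.swap j 0))
    (fun σ _ => σ.trans (Equiv.swap j 0)) ?_ ?_ ?_ ?_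
  · intro σ hσ
    simp only [Finset.mem_filter, Finset.mem_univ, true_and] at hσ ⊢
    simp [Equiv.trans_apply, hσ]
  · intro σ hσ
    simp only [Finset.mem_filter, Finset.mem_univ, true_and] at hσ ⊢
    simp [Equiv.trans_apply, hσ]
  · intro σ _
    refine Equiv.ext fun p => ?_
    simp [Equiv.trans_apply]
  · intro σ _
    refine Equiv.ext fun p => ?_
    simp [Equiv.trans_apply]

/-- The key "sparse tight frame" identity (an instance of Cauchy–Binet). -/
lemma frame {n s : ℕ} (W : Matrix (Fin n) (Fin (s+1)) ℂ) (hW : Wᴴ * W = 1) :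
    ∃ K : ℕ, 0 < K ∧ ∀ j k : Fin (s+1),
      ∑ g : Fin s → Fin n, cg W g j * (starRingEnd ℂ) (cg W g k)
        = (K : ℂ) * (if j = k then 1 else 0) := by
  classical
  set E : Equiv.Perm (Fin (s+1)) → ℂ := fun σ => ((Equiv.Perm.sign σ : ℤ) : ℂ) with hE
  have hsq : ∀ σ : Equiv.Perm (Fin (s+1)), E σ * E σ = 1 := by
    intro σ
    rcases Int.units_eq_one_or (Equiv.Perm.sign σ) with h | h <;> simp [hE, h]
  have hWcol : ∀ c c' : Fin (s+1),
      (∑ a, W a c * (starRingEnd ℂ) (W a c')) = if c' = c then (1:ℂ) else 0 := by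
    intro c c'
    have h1 : (Wᴴ * W) c' c = (1 : Matrix (Fin (s+1)) (Fin (s+1)) ℂ) c' c := by rw [hW]
    rw [Matrix.mul_apply, Matrix.one_apply] at h1
    rw [← h1]
    refine Finset.sum_congr rfl fun a _ => ?_
    rw [Matrix.conjTranspose_apply, RCLike.star_def]
    ring
  have expand : ∀ (j : Fin (s+1)) (g : Fin s → Fin n), cg W g j
      = ∑ σ : Equiv.Perm (Fin (s+1)), E σ
          * ((if σ 0 = j then 1 else 0) * ∏ i : Fin s, W (g i) (σ i.succ)) := by
    intro j g
    rw [cg, det_rows]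
    refine Finset.sum_congr rfl fun σ _ => ?_
    congr 1
    rw [Fin.prod_univ_succ]
    congr 1
    rw [rowMat_zero]
    simp [Pi.single_apply]
  refine ⟨(Finset.univ.filter (fun σ : Equiv.Perm (Fin (s+1)) => σ 0 = 0)).card, ?_, ?_⟩
  · refine Finset.card_pos.mpr ⟨Equiv.refl _, ?_⟩
    simp
  intro j k
  have hconj : ∀ g : Fin s → Fin n, (starRingEnd ℂ) (cg W g k)
      = ∑ τ : Equiv.Perm (Fin (s+1)), E τ
          * ((if τ 0 = k then 1 else 0) * ∏ i : Fin s, (starRingEnd ℂ) (W (g i) (τ i.succ))) := by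
    intro g
    rw [expand k g, map_sum]
    refine Finset.sum_congr rfl fun τ _ => ?_
    rw [(starRingEnd ℂ).map_mul, (starRingEnd ℂ).map_mul, map_prod]
    congr 1
    · simp [hE]
    congr 1
    rw [apply_ite (starRingEnd ℂ)]
    simp
  calc (∑ g : Fin s → Fin n, cg W g j * (starRingEnd ℂ) (cg W g k))
      = ∑ g : Fin s → Fin n, ∑ σ : Equiv.Perm (Fin (s+1)), ∑ τ : Equiv.Perm (Fin (s+1)),
          (E σ * ((if σ 0 = j then 1 else 0) * ∏ i : Fin s, W (g i) (σ i.succ)))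
          * (E τ * ((if τ 0 = k then 1 else 0) * ∏ i : Fin s, (starRingEnd ℂ) (W (g i) (τ i.succ)))) := by
        refine Finset.sum_congr rfl fun g _ => ?_
        rw [expand j g, hconj g, Finset.sum_mul_sum]
    _ = ∑ σ : Equiv.Perm (Fin (s+1)), ∑ τ : Equiv.Perm (Fin (s+1)), ∑ g : Fin s → Fin n,
          (E σ * ((if σ 0 = j then 1 else 0) * ∏ i : Fin s, W (g i) (σ i.succ)))
          * (E τ * ((if τ 0 = k then 1 else 0) * ∏ i : Fin s, (starRingEnd ℂ) (W (g i) (τ i.succ)))) := by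
        rw [Finset.sum_comm]
        exact Finset.sum_congr rfl fun σ _ => Finset.sum_comm
    _ = ∑ σ : Equiv.Perm (Fin (s+1)), ∑ τ : Equiv.Perm (Fin (s+1)),
          ((E σ * E τ) * ((if σ 0 = j then 1 else 0) * (if τ 0 = k then 1 else 0)))
            * ∑ g : Fin s → Fin n, ∏ i : Fin s,
                (W (g i) (σ i.succ) * (starRingEnd ℂ) (W (g i) (τ i.succ))) := by
        refine Finset.sum_congr rfl fun σ _ => Finset.sum_congr rfl fun τ _ => ?_
        rw [Finset.mul_sum]
        refine Finset.sum_congr rfl fun g _ => ?_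
        rw [Finset.prod_mul_distrib]
        ring
    _ = ∑ σ : Equiv.Perm (Fin (s+1)), ∑ τ : Equiv.Perm (Fin (s+1)),
          ((E σ * E τ) * ((if σ 0 = j then 1 else 0) * (if τ 0 = k then 1 else 0)))
            * (if (∀ i : Fin s, τ i.succ = σ i.succ) then 1 else 0) := by
        refine Finset.sum_congr rfl fun σ _ => Finset.sum_congr rfl fun τ _ => ?_
        congr 1
        have hps := Fintype.prod_sum (κ := fun _ : Fin s => Fin n)
          (fun i a => W a (σ i.succ) * (starRingEnd ℂ) (W a (τ i.succ)))
        rw [← hps, Finset.prod_congr rfl fun i _ => hWcol (σ i.succ) (τ i.succ),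
          Finset.prod_boole]
        simp
    _ = ∑ σ : Equiv.Perm (Fin (s+1)),
          (if σ 0 = j then 1 else 0) * (if σ 0 = k then (1:ℂ) else 0) := by
        refine Finset.sum_congr rfl fun σ _ => ?_
        have hcond : ∀ τ : Equiv.Perm (Fin (s+1)),
            (if (∀ i : Fin s, τ i.succ = σ i.succ) then (1:ℂ) else 0)
              = if τ = σ then 1 else 0 :=
          fun τ => if_congr ⟨succ_agree, fun h i => by rw [h]⟩ rfl rfl
        calc (∑ τ : Equiv.Perm (Fin (s+1)),
              ((E σ * E τ) * ((if σ 0 = j then 1 else 0) * (if τ 0 = k then 1 else 0)))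
                * (if (∀ i : Fin s, τ i.succ = σ i.succ) then 1 else 0))
            = ∑ τ : Equiv.Perm (Fin (s+1)), (if τ = σ then
                ((E σ * E τ) * ((if σ 0 = j then 1 else 0) * (if τ 0 = k then 1 else 0))) else 0) := by
              refine Finset.sum_congr rfl fun τ _ => ?_
              rw [hcond τ, mul_ite, mul_one, mul_zero]
          _ = (E σ * E σ) * ((if σ 0 = j then 1 else 0) * (if σ 0 = k then 1 else 0)) := by
              rw [Finset.sum_ite_eq' Finset.univ σ]
              simp
          _ = (if σ 0 = j then 1 else 0) * (if σ 0 = k then (1:ℂ) else 0) := by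
              rw [hsq σ, one_mul]
    _ = ((Finset.univ.filter (fun σ : Equiv.Perm (Fin (s+1)) => σ 0 = 0)).card : ℂ)
          * (if j = k then 1 else 0) := by
        by_cases hjk : j = k
        · subst hjk
          rw [if_pos rfl, mul_one]
          have h1 : ∀ σ : Equiv.Perm (Fin (s+1)),
              (if σ 0 = j then (1:ℂ) else 0) * (if σ 0 = j then 1 else 0)
                = if σ 0 = j then 1 else 0 := by
            intro σ
            by_cases h : σ 0 = j <;> simp [h]
          rw [Finset.sum_congr rfl fun σ _ => h1 σ, Finset.sum_boole, card_perm_fix j]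
        · rw [if_neg hjk, mul_zero]
          refine Finset.sum_eq_zero fun σ _ => ?_
          by_cases h : σ 0 = j
          · have h2 : ¬ (σ 0 = k) := fun hk => hjk (h.symm.trans hk)
            rw [if_neg h2, mul_zero]
          · rw [if_neg h, zero_mul]

lemma spectral_entry {m : ℕ} {M : Matrix (Fin m) (Fin m) ℂ} (hM : M.IsHermitian) (p q : Fin m) :
    M p q = ∑ k, ((hM.eigenvalues k : ℝ) : ℂ)
      * ((hM.eigenvectorUnitary : Matrix (Fin m) (Fin m) ℂ) p k
      * (starRingEnd ℂ) ((hM.eigenvectorUnitary : Matrix (Fin m) (Fin m) ℂ) q k)) := by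
  conv_lhs => rw [hM.spectral_theorem]
  rw [Unitary.conjStarAlgAut_apply, Matrix.mul_apply]
  refine Finset.sum_congr rfl fun l _ => ?_
  rw [Matrix.mul_diagonal, Matrix.star_apply, RCLike.star_def]
  simp only [Function.comp_apply]
  have hco : ∀ x : ℝ, (x : ℂ) = RCLike.ofReal x := fun _ => rfl
  simp only [hco]
  ring

lemma re_cast_mul (e : ℝ) (z : ℂ) : (((e : ℂ)) * z).re = e * z.re := by
  simp [Complex.mul_re]

lemma quad_lower {m : ℕ} {M : Matrix (Fin m) (Fin m) ℂ} (hM : M.IsHermitian) (μ0 : ℝ)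
    (hμ : ∀ k, μ0 ≤ hM.eigenvalues k) (v : Fin m → ℂ) :
    μ0 * ∑ p, Complex.normSq (v p) ≤ (dotProduct (star v) (M *ᵥ v)).re := by
  classical
  set V : Matrix (Fin m) (Fin m) ℂ := (hM.eigenvectorUnitary : Matrix (Fin m) (Fin m) ℂ) with hV
  set y : Fin m → ℂ := fun k => ∑ p, (starRingEnd ℂ) (V p k) * v p with hy
  have hyvec : y = (star V) *ᵥ v := by
    funext k
    rw [Matrix.mulVec, dotProduct]
    refine Finset.sum_congr rfl fun p _ => ?_
    rw [Matrix.star_apply, RCLike.star_def]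
  have hConjy : ∀ k, (starRingEnd ℂ) (y k) = ∑ p, V p k * (starRingEnd ℂ) (v p) := by
    intro k
    have h0 : y k = ∑ p, (starRingEnd ℂ) (V p k) * v p := rfl
    rw [h0, map_sum]
    refine Finset.sum_congr rfl fun p _ => ?_
    rw [(starRingEnd ℂ).map_mul, Complex.conj_conj]
  have hVV : V * star V = 1 := Matrix.mem_unitaryGroup_iff.mp (hM.eigenvectorUnitary).2
  have hcast : ∀ w : Fin m → ℂ,
      dotProduct (star w) w = ((∑ p, Complex.normSq (w p) : ℝ) : ℂ) := by
    intro w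
    rw [dotProduct]
    push_cast
    refine Finset.sum_congr rfl fun p _ => ?_
    rw [Pi.star_apply, RCLike.star_def, mul_comm, Complex.mul_conj]
  have par : ∑ k, Complex.normSq (y k) = ∑ p, Complex.normSq (v p) := by
    have h1 : dotProduct (star y) y = dotProduct (star v) v := by
      rw [hyvec, Matrix.star_mulVec, Matrix.dotProduct_mulVec, Matrix.vecMul_vecMul]
      have h2 : (star V)ᴴ * star V = 1 := by
        rw [← Matrix.star_eq_conjTranspose, star_star, hVV]
      rw [h2, Matrix.vecMul_one]
    rw [hcast y, hcast v] at h1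
    exact_mod_cast h1
  have key : dotProduct (star v) (M *ᵥ v)
      = ∑ k, ((hM.eigenvalues k : ℝ) : ℂ) * (((starRingEnd ℂ) (y k)) * y k) := by
    calc dotProduct (star v) (M *ᵥ v)
        = ∑ p, ∑ q, (starRingEnd ℂ) (v p) * (M p q * v q) := by
          rw [dotProduct]
          refine Finset.sum_congr rfl fun p _ => ?_
          rw [Matrix.mulVec, dotProduct, Finset.mul_sum]
          refine Finset.sum_congr rfl fun q _ => ?_
          rw [Pi.star_apply, RCLike.star_def]
      _ = ∑ p, ∑ q, ∑ k, ((hM.eigenvalues k : ℝ) : ℂ)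
            * ((V p k * (starRingEnd ℂ) (v p)) * ((starRingEnd ℂ) (V q k) * v q)) := by
          refine Finset.sum_congr rfl fun p _ => Finset.sum_congr rfl fun q _ => ?_
          rw [spectral_entry hM p q, Finset.sum_mul, Finset.mul_sum]
          refine Finset.sum_congr rfl fun k _ => ?_
          ring
      _ = ∑ k, ∑ p, ∑ q, ((hM.eigenvalues k : ℝ) : ℂ)
            * ((V p k * (starRingEnd ℂ) (v p)) * ((starRingEnd ℂ) (V q k) * v q)) := by
          rw [Finset.sum_congr rfl fun p _ => Finset.sum_comm]
          exact Finset.sum_comm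
      _ = ∑ k, ((hM.eigenvalues k : ℝ) : ℂ)
            * ((∑ p, V p k * (starRingEnd ℂ) (v p)) * (∑ q, (starRingEnd ℂ) (V q k) * v q)) := by
          refine Finset.sum_congr rfl fun k _ => ?_
          rw [Finset.sum_mul_sum, Finset.mul_sum]
          refine Finset.sum_congr rfl fun p _ => ?_
          rw [Finset.mul_sum]
      _ = ∑ k, ((hM.eigenvalues k : ℝ) : ℂ) * (((starRingEnd ℂ) (y k)) * y k) := by
          refine Finset.sum_congr rfl fun k _ => ?_
          rw [← hConjy k]
  calc μ0 * ∑ p, Complex.normSq (v p) = μ0 * ∑ k, Complex.normSq (y k) := by rw [par]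
    _ = ∑ k, μ0 * Complex.normSq (y k) := Finset.mul_sum _ _ _
    _ ≤ ∑ k, hM.eigenvalues k * Complex.normSq (y k) :=
        Finset.sum_le_sum fun k _ =>
          mul_le_mul_of_nonneg_right (hμ k) (Complex.normSq_nonneg _)
    _ = (dotProduct (star v) (M *ᵥ v)).re := by
        rw [key, Complex.re_sum]
        refine Finset.sum_congr rfl fun k _ => ?_
        rw [mul_comm ((starRingEnd ℂ) (y k)) (y k), Complex.mul_conj, ← Complex.ofReal_mul,
          Complex.ofReal_re]

lemma mu_bddBelow {n m : ℕ} {A : Matrix (Fin n) (Fin n) ℂ} (hA : A.PosSemidef) :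
    ∀ t ∈ {t : ℝ | ∃ f : Fin m → Fin n, Function.Injective f ∧
      ∃ h : (A.submatrix f f).IsHermitian, ∃ i : Fin m, t = h.eigenvalues i}, (0:ℝ) ≤ t := by
  rintro t ⟨f, hf, h, i, rfl⟩
  exact (hA.submatrix f).eigenvalues_nonneg i

lemma mu_le {n m : ℕ} {A : Matrix (Fin n) (Fin n) ℂ} (hA : A.PosSemidef)
    (f : Fin m → Fin n) (hf : Function.Injective f) (h : (A.submatrix f f).IsHermitian)
    (i : Fin m) : mu m A ≤ h.eigenvalues i :=
  csInf_le ⟨0, mu_bddBelow hA⟩ ⟨f, hf, h, i, rfl⟩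

lemma mu_nonneg {n m : ℕ} {A : Matrix (Fin n) (Fin n) ℂ} (hA : A.PosSemidef)
    (hm0 : 0 < m) (hmn : m ≤ n) : 0 ≤ mu m A := by
  refine le_csInf ⟨((hA.submatrix (Fin.castLE hmn)).1).eigenvalues ⟨0, hm0⟩,
    Fin.castLE hmn, Fin.castLE_injective hmn, (hA.submatrix (Fin.castLE hmn)).1, ⟨0, hm0⟩, rfl⟩
    (mu_bddBelow hA)

lemma sparse_quad {n m : ℕ} {A : Matrix (Fin n) (Fin n) ℂ} (hA : A.PosSemidef)
    (hmn : m ≤ n) (u : Fin n → ℂ) (S : Finset (Fin n)) (hcard : S.card ≤ m)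
    (hsupp : ∀ p, u p ≠ 0 → p ∈ S) :
    mu m A * ∑ p, Complex.normSq (u p) ≤ (dotProduct (star u) (A *ᵥ u)).re := by
  classical
  obtain ⟨S', hSS', hS'⟩ := Finset.exists_superset_card_eq hcard (by simpa using hmn)
  set e := S'.equivFinOfCardEq hS' with he
  set f : Fin m → Fin n := fun a => (e.symm a : Fin n) with hfdef
  have hf : Function.Injective f := by
    intro a b hab
    exact e.symm.injective (Subtype.ext hab)
  have hern : (A.submatrix f f).IsHermitian := (hA.submatrix f).1
  have hvan : ∀ p, p ∉ S' → u p = 0 := by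
    intro p hp
    by_contra hc
    exact hp (hSS' (hsupp p hc))
  -- generic reindexing for sums of functions vanishing off S'
  have reindex : ∀ F : Fin n → ℂ, (∀ p, p ∉ S' → F p = 0) → ∑ p, F p = ∑ a, F (f a) := by
    intro F hF
    have h1 : ∑ p ∈ S', F p = ∑ p, F p :=
      Finset.sum_subset (Finset.subset_univ S') (fun p _ hp => hF p hp)
    have h2 : ∑ p ∈ S', F p = ∑ x : {x // x ∈ S'}, F x := (Finset.sum_coe_sort S' F).symm
    have h3 : ∑ x : {x // x ∈ S'}, F x = ∑ a, F (f a) := by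
      refine Fintype.sum_equiv e (fun x => F x) (fun a => F (f a)) fun x => ?_
      rw [hfdef]
      simp
    rw [← h1, h2, h3]
  have hnorm : (∑ p, Complex.normSq (u p)) = ∑ a, Complex.normSq (u (f a)) := by
    have := reindex (fun p => ((Complex.normSq (u p) : ℝ) : ℂ)) (fun p hp => by simp [hvan p hp])
    exact_mod_cast this
  have hquad : dotProduct (star u) (A *ᵥ u)
      = dotProduct (star (fun a => u (f a))) ((A.submatrix f f) *ᵥ (fun a => u (f a))) := by
    have houter : ∀ p, (star u) p * (A *ᵥ u) p = (starRingEnd ℂ) (u p) * ∑ q, A p q * u q := by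
      intro p
      rw [Pi.star_apply, RCLike.star_def, Matrix.mulVec, dotProduct]
    have hinner : ∀ p, (∑ q, A p q * u q) = ∑ b, A p (f b) * u (f b) := by
      intro p
      exact reindex (fun q => A p q * u q) (fun q hq => by simp [hvan q hq])
    calc dotProduct (star u) (A *ᵥ u)
        = ∑ p, (starRingEnd ℂ) (u p) * ∑ b, A p (f b) * u (f b) := by
          rw [dotProduct]
          refine Finset.sum_congr rfl fun p _ => ?_
          rw [houter p, hinner p]
      _ = ∑ a, (starRingEnd ℂ) (u (f a)) * ∑ b, A (f a) (f b) * u (f b) := by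
          refine reindex _ fun p hp => ?_
          rw [hvan p hp]
          simp
      _ = dotProduct (star (fun a => u (f a))) ((A.submatrix f f) *ᵥ (fun a => u (f a))) := by
          rw [dotProduct]
          refine Finset.sum_congr rfl fun a _ => ?_
          rw [Pi.star_apply, RCLike.star_def, Matrix.mulVec, dotProduct]
          rfl
  rw [hquad, hnorm]
  exact quad_lower hern (mu m A) (fun k => mu_le hA f hf hern k) _

lemma core {n s : ℕ} {A : Matrix (Fin n) (Fin n) ℂ} (hA : A.PosSemidef)
    (W : Matrix (Fin n) (Fin (s+1)) ℂ) (hW : Wᴴ * W = 1) (x : Fin n → ℂ) :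
    mu (n - s) A * ∑ p, Complex.normSq (x p) * (∑ j, Complex.normSq (W p j))
      ≤ ∑ j, (dotProduct (star (fun p => (starRingEnd ℂ) (W p j) * x p))
          (A *ᵥ (fun p => (starRingEnd ℂ) (W p j) * x p))).re := by
  classical
  obtain ⟨K, hK, hfr⟩ := frame W hW
  set u : (Fin s → Fin n) → Fin n → ℂ := fun g p => x p * (starRingEnd ℂ) (zg W g p) with hu
  set T : Fin (s+1) → Fin (s+1) → ℂ := fun j k => ∑ p, ∑ q,
      ((starRingEnd ℂ) (x p) * W p j) * (A p q * (x q * (starRingEnd ℂ) (W q k))) with hT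
  have hzg : ∀ g p, zg W g p = ∑ j, W p j * cg W g j := fun g p => rfl
  have step1 : ∀ g, dotProduct (star (u g)) (A *ᵥ (u g))
      = ∑ j, ∑ k, (cg W g j * (starRingEnd ℂ) (cg W g k)) * T j k := by
    intro g
    have h1 : ∀ p, (star (u g)) p = (starRingEnd ℂ) (x p) * ∑ j, W p j * cg W g j := by
      intro p
      rw [Pi.star_apply, RCLike.star_def]
      have h0 : u g p = x p * (starRingEnd ℂ) (zg W g p) := rfl
      rw [h0, (starRingEnd ℂ).map_mul, Complex.conj_conj, hzg]
    have h2 : ∀ q, u g q = x q * ∑ k, (starRingEnd ℂ) (W q k) * (starRingEnd ℂ) (cg W g k) := by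
      intro q
      have h0 : u g q = x q * (starRingEnd ℂ) (zg W g q) := rfl
      rw [h0, hzg, map_sum]
      congr 1
      refine Finset.sum_congr rfl fun k _ => ?_
      rw [(starRingEnd ℂ).map_mul]
    have expand_pq : ∀ p q : Fin n, (star (u g)) p * (A p q * (u g) q)
        = ∑ j, ∑ k, (cg W g j * (starRingEnd ℂ) (cg W g k))
            * (((starRingEnd ℂ) (x p) * W p j) * (A p q * (x q * (starRingEnd ℂ) (W q k)))) := by
      intro p q
      calc (star (u g)) p * (A p q * (u g) q)
          = ((∑ j, W p j * cg W g j)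
              * (∑ k, (starRingEnd ℂ) (W q k) * (starRingEnd ℂ) (cg W g k)))
              * ((starRingEnd ℂ) (x p) * (A p q * x q)) := by rw [h1, h2]; ring
        _ = ∑ j, ∑ k, ((W p j * cg W g j)
              * ((starRingEnd ℂ) (W q k) * (starRingEnd ℂ) (cg W g k)))
              * ((starRingEnd ℂ) (x p) * (A p q * x q)) := by
            rw [Finset.sum_mul_sum, Finset.sum_mul]
            refine Finset.sum_congr rfl fun j _ => ?_
            rw [Finset.sum_mul]
        _ = ∑ j, ∑ k, (cg W g j * (starRingEnd ℂ) (cg W g k))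
              * (((starRingEnd ℂ) (x p) * W p j) * (A p q * (x q * (starRingEnd ℂ) (W q k)))) := by
            refine Finset.sum_congr rfl fun j _ => Finset.sum_congr rfl fun k _ => ?_
            ring
    calc dotProduct (star (u g)) (A *ᵥ (u g))
        = ∑ p, ∑ q, (star (u g)) p * (A p q * (u g) q) := by
          rw [dotProduct]
          refine Finset.sum_congr rfl fun p _ => ?_
          rw [Matrix.mulVec, dotProduct, Finset.mul_sum]
      _ = ∑ p, ∑ q, ∑ j, ∑ k, (cg W g j * (starRingEnd ℂ) (cg W g k))
            * (((starRingEnd ℂ) (x p) * W p j) * (A p q * (x q * (starRingEnd ℂ) (W q k)))) := by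
          exact Finset.sum_congr rfl fun p _ => Finset.sum_congr rfl fun q _ => expand_pq p q
      _ = ∑ j, ∑ k, ∑ p, ∑ q, (cg W g j * (starRingEnd ℂ) (cg W g k))
            * (((starRingEnd ℂ) (x p) * W p j) * (A p q * (x q * (starRingEnd ℂ) (W q k)))) := by
          rw [Finset.sum_congr rfl fun p _ => Finset.sum_comm]
          rw [Finset.sum_comm]
          refine Finset.sum_congr rfl fun j _ => ?_
          rw [Finset.sum_congr rfl fun p _ => Finset.sum_comm]
          rw [Finset.sum_comm]
      _ = ∑ j, ∑ k, (cg W g j * (starRingEnd ℂ) (cg W g k)) * T j k := by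
          refine Finset.sum_congr rfl fun j _ => Finset.sum_congr rfl fun k _ => ?_
          rw [hT]
          simp only
          rw [Finset.mul_sum]
          refine Finset.sum_congr rfl fun p _ => ?_
          rw [Finset.mul_sum]
  have step2 : ∑ g : Fin s → Fin n, dotProduct (star (u g)) (A *ᵥ (u g))
      = (K:ℂ) * ∑ j, T j j := by
    calc ∑ g : Fin s → Fin n, dotProduct (star (u g)) (A *ᵥ (u g))
        = ∑ g : Fin s → Fin n, ∑ j, ∑ k,
            (cg W g j * (starRingEnd ℂ) (cg W g k)) * T j k :=
          Finset.sum_congr rfl fun g _ => step1 g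
      _ = ∑ j, ∑ k, (∑ g : Fin s → Fin n, cg W g j * (starRingEnd ℂ) (cg W g k)) * T j k := by
          rw [Finset.sum_comm]
          refine Finset.sum_congr rfl fun j _ => ?_
          rw [Finset.sum_comm]
          refine Finset.sum_congr rfl fun k _ => ?_
          rw [Finset.sum_mul]
      _ = ∑ j, ∑ k, ((K:ℂ) * (if j = k then 1 else 0)) * T j k :=
          Finset.sum_congr rfl fun j _ => Finset.sum_congr rfl fun k _ => by rw [hfr j k]
      _ = (K:ℂ) * ∑ j, T j j := by
          rw [Finset.mul_sum]
          refine Finset.sum_congr rfl fun j _ => ?_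
          rw [Finset.sum_eq_single j]
          · rw [if_pos rfl, mul_one]
          · intro k _ hk
            rw [if_neg fun h => hk h.symm, mul_zero, zero_mul]
          · intro h
            exact absurd (Finset.mem_univ j) h
  have step3 : ∀ j, dotProduct (star (fun p => (starRingEnd ℂ) (W p j) * x p))
      (A *ᵥ (fun p => (starRingEnd ℂ) (W p j) * x p)) = T j j := by
    intro j
    rw [dotProduct, hT]
    simp only
    refine Finset.sum_congr rfl fun p _ => ?_
    rw [Matrix.mulVec, dotProduct, Finset.mul_sum]
    refine Finset.sum_congr rfl fun q _ => ?_
    rw [Pi.star_apply, RCLike.star_def, (starRingEnd ℂ).map_mul, Complex.conj_conj]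
    ring
  have normB : ∀ p, (∑ g : Fin s → Fin n, Complex.normSq (zg W g p))
      = (K:ℝ) * ∑ j, Complex.normSq (W p j) := by
    intro p
    have hc : (∑ g : Fin s → Fin n, ((Complex.normSq (zg W g p) : ℝ) : ℂ))
        = ((K : ℝ) : ℂ) * ∑ j, ((Complex.normSq (W p j) : ℝ) : ℂ) := by
      calc (∑ g : Fin s → Fin n, ((Complex.normSq (zg W g p) : ℝ) : ℂ))
          = ∑ g : Fin s → Fin n, zg W g p * (starRingEnd ℂ) (zg W g p) :=
            Finset.sum_congr rfl fun g _ => (Complex.mul_conj _).symm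
        _ = ∑ g : Fin s → Fin n, ∑ j, ∑ k,
              (cg W g j * (starRingEnd ℂ) (cg W g k)) * (W p j * (starRingEnd ℂ) (W p k)) := by
            refine Finset.sum_congr rfl fun g _ => ?_
            have hconjz : (starRingEnd ℂ) (zg W g p)
                = ∑ k, (starRingEnd ℂ) (W p k) * (starRingEnd ℂ) (cg W g k) := by
              rw [hzg, map_sum]
              refine Finset.sum_congr rfl fun k _ => ?_
              rw [(starRingEnd ℂ).map_mul]
            rw [hconjz, hzg, Finset.sum_mul_sum]
            refine Finset.sum_congr rfl fun j _ => Finset.sum_congr rfl fun k _ => ?_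
            ring
        _ = ∑ j, ∑ k, (∑ g : Fin s → Fin n, cg W g j * (starRingEnd ℂ) (cg W g k))
              * (W p j * (starRingEnd ℂ) (W p k)) := by
            rw [Finset.sum_comm]
            refine Finset.sum_congr rfl fun j _ => ?_
            rw [Finset.sum_comm]
            refine Finset.sum_congr rfl fun k _ => ?_
            rw [Finset.sum_mul]
        _ = ∑ j, ((K:ℂ) * (if j = j then 1 else 0)) * (W p j * (starRingEnd ℂ) (W p j)) := by
            refine Finset.sum_congr rfl fun j _ => ?_
            rw [Finset.sum_eq_single j]
            · rw [hfr j j]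
            · intro k _ hk
              rw [hfr j k, if_neg fun h => hk h.symm, mul_zero, zero_mul]
            · intro h
              exact absurd (Finset.mem_univ j) h
        _ = ((K : ℝ) : ℂ) * ∑ j, ((Complex.normSq (W p j) : ℝ) : ℂ) := by
            rw [Finset.mul_sum]
            refine Finset.sum_congr rfl fun j _ => ?_
            rw [if_pos rfl, mul_one, Complex.mul_conj]
            norm_cast
    exact_mod_cast hc
  have claimC : ∀ g : Fin s → Fin n, mu (n - s) A * ∑ p, Complex.normSq (u g p)
      ≤ (dotProduct (star (u g)) (A *ᵥ (u g))).re := by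
    intro g
    by_cases hg : Function.Injective g
    · refine sparse_quad hA (Nat.sub_le n s) (u g) (Finset.image g Finset.univ)ᶜ ?_ ?_
      · rw [Finset.card_compl, Finset.card_image_of_injective _ hg]
        simp
      · intro p hp
        rw [Finset.mem_compl]
        intro hmem
        rw [Finset.mem_image] at hmem
        obtain ⟨i, _, rfl⟩ := hmem
        refine hp ?_
        have h0 : u g (g i) = x (g i) * (starRingEnd ℂ) (zg W g (g i)) := rfl
        rw [h0, zg_apply_mem W g i]
        simp
    · have hzero : ∀ p, u g p = 0 := by
        intro p
        have hz : zg W g p = 0 := by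
          rw [hzg]
          refine Finset.sum_eq_zero fun j _ => ?_
          rw [cg_noninj W hg j, mul_zero]
        have h0 : u g p = x p * (starRingEnd ℂ) (zg W g p) := rfl
        rw [h0, hz]
        simp
      have hz1 : ∑ p, Complex.normSq (u g p) = 0 := by
        refine Finset.sum_eq_zero fun p _ => ?_
        rw [hzero p]
        simp
      have hz2 : dotProduct (star (u g)) (A *ᵥ (u g)) = 0 := by
        rw [dotProduct]
        refine Finset.sum_eq_zero fun p _ => ?_
        rw [Pi.star_apply, hzero p]
        simp
      rw [hz1, hz2, mul_zero]
      simp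
  have hKpos : (0:ℝ) < (K:ℝ) := by exact_mod_cast hK
  have hnormsum : ∑ g : Fin s → Fin n, ∑ p, Complex.normSq (u g p)
      = (K:ℝ) * ∑ p, Complex.normSq (x p) * (∑ j, Complex.normSq (W p j)) := by
    calc ∑ g : Fin s → Fin n, ∑ p, Complex.normSq (u g p)
        = ∑ p, ∑ g : Fin s → Fin n, Complex.normSq (u g p) := Finset.sum_comm
      _ = ∑ p, Complex.normSq (x p) * ((K:ℝ) * ∑ j, Complex.normSq (W p j)) := by
          refine Finset.sum_congr rfl fun p _ => ?_
          rw [← normB p, Finset.mul_sum]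
          refine Finset.sum_congr rfl fun g _ => ?_
          have h0 : u g p = x p * (starRingEnd ℂ) (zg W g p) := rfl
          rw [h0, Complex.normSq_mul, Complex.normSq_conj]
      _ = (K:ℝ) * ∑ p, Complex.normSq (x p) * (∑ j, Complex.normSq (W p j)) := by
          rw [Finset.mul_sum]
          refine Finset.sum_congr rfl fun p _ => ?_
          ring
  have main : (K:ℝ) * (mu (n - s) A * ∑ p, Complex.normSq (x p) * (∑ j, Complex.normSq (W p j)))
      ≤ (K:ℝ) * ∑ j, (dotProduct (star (fun p => (starRingEnd ℂ) (W p j) * x p))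
          (A *ᵥ (fun p => (starRingEnd ℂ) (W p j) * x p))).re := by
    have hre : (K:ℝ) * ∑ j, (dotProduct (star (fun p => (starRingEnd ℂ) (W p j) * x p))
        (A *ᵥ (fun p => (starRingEnd ℂ) (W p j) * x p))).re
        = ∑ g : Fin s → Fin n, (dotProduct (star (u g)) (A *ᵥ (u g))).re := by
      have h1 : ((K:ℂ) * ∑ j, T j j).re = (K:ℝ) * (∑ j, T j j).re := by
        have : (K:ℂ) = (((K:ℝ)):ℂ) := by push_cast; ring
        rw [this, re_cast_mul]
      calc (K:ℝ) * ∑ j, (dotProduct (star (fun p => (starRingEnd ℂ) (W p j) * x p))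
            (A *ᵥ (fun p => (starRingEnd ℂ) (W p j) * x p))).re
          = (K:ℝ) * (∑ j, T j j).re := by
            rw [Complex.re_sum]
            congr 1
            exact Finset.sum_congr rfl fun j _ => by rw [step3 j]
        _ = ((K:ℂ) * ∑ j, T j j).re := h1.symm
        _ = (∑ g : Fin s → Fin n, dotProduct (star (u g)) (A *ᵥ (u g))).re := by
            rw [step2]
        _ = ∑ g : Fin s → Fin n, (dotProduct (star (u g)) (A *ᵥ (u g))).re :=
            Complex.re_sum _ _
    rw [hre]
    calc (K:ℝ) * (mu (n - s) A * ∑ p, Complex.normSq (x p) * (∑ j, Complex.normSq (W p j)))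
        = mu (n - s) A * ((K:ℝ) * ∑ p, Complex.normSq (x p) * (∑ j, Complex.normSq (W p j))) := by
          ring
      _ = mu (n - s) A * ∑ g : Fin s → Fin n, ∑ p, Complex.normSq (u g p) := by rw [hnormsum]
      _ = ∑ g : Fin s → Fin n, mu (n - s) A * ∑ p, Complex.normSq (u g p) := by
          rw [Finset.mul_sum]
      _ ≤ ∑ g : Fin s → Fin n, (dotProduct (star (u g)) (A *ᵥ (u g))).re :=
          Finset.sum_le_sum fun g _ => claimC g
  exact le_of_mul_le_mul_left main hKpos

end HadamardAux

open HadamardAux in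
/-- **Main theorem.** For positive semidefinite `A, B` with `r = rank B ≥ 1`,
`λ_min(A ⊙ B) ≥ (μ_{n-r+1}(A)/κ_eff(B)) · min_i b_ii`. -/
theorem stmt_9 {n : ℕ} (A B : Matrix (Fin n) (Fin n) ℂ)
    (hA : A.PosSemidef) (hB : B.PosSemidef) (r : ℕ) (hr : r = B.rank) (hr1 : 1 ≤ r)
    (hAB : (A ⊙ B).IsHermitian) :
    lambdaMin hAB ≥ mu (n - r + 1) A / kappaEff hB.1 * ⨅ i, (B i i).re := by
  classical
  have hrn : r ≤ n := by
    rw [hr]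
    simpa using B.rank_le_card_width
  have hn : 0 < n := lt_of_lt_of_le hr1 hrn
  obtain ⟨s, hs⟩ : ∃ s, r = s + 1 := ⟨r - 1, by omega⟩
  set eig : Fin n → ℝ := hB.1.eigenvalues with heig
  set V : Matrix (Fin n) (Fin n) ℂ := (hB.1.eigenvectorUnitary : Matrix (Fin n) (Fin n) ℂ) with hV
  set Kf : Finset (Fin n) := Finset.univ.filter (fun k => eig k ≠ 0) with hKf
  have hKfcard : Kf.card = s + 1 := by
    have h1 : B.rank = Fintype.card {i // eig i ≠ 0} := hB.1.rank_eq_card_non_zero_eigs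
    rw [Fintype.card_subtype] at h1
    rw [hKf, ← h1, ← hr, hs]
  have heignn : ∀ k, 0 ≤ eig k := fun k => hB.eigenvalues_nonneg k
  have hposKf : ∀ k ∈ Kf, 0 < eig k := by
    intro k hk
    rw [hKf, Finset.mem_filter] at hk
    exact lt_of_le_of_ne (heignn k) (Ne.symm hk.2)
  have hKfne : Kf.Nonempty := by
    rw [← Finset.card_pos, hKfcard]
    omega
  obtain ⟨k0, hk0⟩ := hKfne
  have hSfin : {t : ℝ | (∃ i, eig i = t) ∧ 0 < t}.Finite :=
    Set.Finite.subset (Set.finite_range eig) (fun t ht => ht.1)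
  have hSne : {t : ℝ | (∃ i, eig i = t) ∧ 0 < t}.Nonempty :=
    ⟨eig k0, ⟨k0, rfl⟩, hposKf k0 hk0⟩
  have hlminpos : 0 < lambdaMinPos hB.1 := (Set.Nonempty.csInf_mem hSne hSfin).2
  have hlmin_le : ∀ k ∈ Kf, lambdaMinPos hB.1 ≤ eig k := fun k hk =>
    csInf_le (Set.Finite.bddBelow hSfin) ⟨⟨k, rfl⟩, hposKf k hk⟩
  have hbddA : BddAbove (Set.range eig) := Set.Finite.bddAbove (Set.finite_range eig)
  have hle_max : ∀ k, eig k ≤ lambdaMax hB.1 := fun k => le_ciSup hbddA k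
  have hlmaxpos : 0 < lambdaMax hB.1 := lt_of_lt_of_le (hposKf k0 hk0) (hle_max k0)
  have hbddB : BddBelow (Set.range fun i => (B i i).re) :=
    Set.Finite.bddBelow (Set.finite_range _)
  have hβ_le : ∀ p, (⨅ i, (B i i).re) ≤ (B p p).re := fun p => ciInf_le hbddB p
  have hdiag_nn : ∀ p, 0 ≤ (B p p).re := by
    intro p
    have h1 := hB.dotProduct_mulVec_nonneg (Pi.single p 1)
    have h2 : dotProduct (star (Pi.single p 1)) (B *ᵥ (Pi.single p 1)) = B p p := by
      rw [Matrix.mulVec_single, dotProduct]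
      rw [Finset.sum_eq_single p]
      · simp
      · intro q _ hq
        simp [Pi.single_apply, hq]
      · intro h
        exact absurd (Finset.mem_univ p) h
    rw [h2] at h1
    exact (Complex.le_def.mp h1).1
  haveI : Nonempty (Fin n) := ⟨⟨0, hn⟩⟩
  have hβ0 : 0 ≤ ⨅ i, (B i i).re := le_ciInf fun p => hdiag_nn p
  have hmu0 : 0 ≤ mu (n - r + 1) A := mu_nonneg hA (by omega) (by omega)
  set e : {k // k ∈ Kf} ≃ Fin (s+1) := Kf.equivFinOfCardEq hKfcard with he
  set W : Matrix (Fin n) (Fin (s+1)) ℂ := Matrix.of (fun p j => V p ((e.symm j) : Fin n)) with hWdef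
  have hWapp : ∀ p j, W p j = V p ((e.symm j) : Fin n) := fun p j => rfl
  have hWuni : Wᴴ * W = 1 := by
    have hVV : star V * V = 1 := Matrix.mem_unitaryGroup_iff'.mp (hB.1.eigenvectorUnitary).2
    ext j j'
    rw [Matrix.mul_apply, Matrix.one_apply]
    have h1 : ∀ p, Wᴴ j p * W p j'
        = (star V) ((e.symm j) : Fin n) p * V p ((e.symm j') : Fin n) := by
      intro p
      simp [Matrix.conjTranspose_apply, Matrix.star_apply, hWapp]
    rw [Finset.sum_congr rfl fun p _ => h1 p, ← Matrix.mul_apply, hVV, Matrix.one_apply]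
    by_cases hjj : j = j'
    · rw [if_pos (by rw [hjj]), if_pos hjj]
    · rw [if_neg (fun hc => hjj (e.symm.injective (Subtype.ext hc))), if_neg hjj]
  have hreKf : ∀ F : Fin n → ℝ, ∑ k ∈ Kf, F k = ∑ j, F ((e.symm j) : Fin n) := by
    intro F
    rw [← Finset.sum_coe_sort Kf F]
    exact Fintype.sum_equiv e (fun y => F ↑y) (fun j => F ((e.symm j) : Fin n))
      (fun y => by simp)
  have hmr : n - s = n - r + 1 := by omega
  -- master inequality
  have master : ∀ x : Fin n → ℂ,
      lambdaMinPos hB.1 * (mu (n - r + 1) A * (((⨅ i, (B i i).re) / lambdaMax hB.1)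
        * ∑ p, Complex.normSq (x p)))
      ≤ (dotProduct (star x) ((A ⊙ B) *ᵥ x)).re := by
    intro x
    set w : Fin n → Fin n → ℂ := fun k p => (starRingEnd ℂ) (V p k) * x p with hw
    have hquad : dotProduct (star x) ((A ⊙ B) *ᵥ x)
        = ∑ k, ((eig k : ℝ) : ℂ) * (dotProduct (star (w k)) (A *ᵥ (w k))) := by
      calc dotProduct (star x) ((A ⊙ B) *ᵥ x)
          = ∑ p, ∑ q, (starRingEnd ℂ) (x p) * ((A p q * B p q) * x q) := by
            rw [dotProduct]
            refine Finset.sum_congr rfl fun p _ => ?_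
            rw [Matrix.mulVec, dotProduct, Finset.mul_sum]
            refine Finset.sum_congr rfl fun q _ => ?_
            rw [Pi.star_apply, RCLike.star_def, Matrix.hadamard_apply]
        _ = ∑ p, ∑ q, ∑ k, ((eig k : ℝ) : ℂ)
              * ((V p k * (starRingEnd ℂ) (x p)) * (A p q * ((starRingEnd ℂ) (V q k) * x q))) := by
            refine Finset.sum_congr rfl fun p _ => Finset.sum_congr rfl fun q _ => ?_
            rw [spectral_entry hB.1 p q, Finset.mul_sum, Finset.sum_mul, Finset.mul_sum]
            refine Finset.sum_congr rfl fun k _ => ?_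
            ring
        _ = ∑ k, ∑ p, ∑ q, ((eig k : ℝ) : ℂ)
              * ((V p k * (starRingEnd ℂ) (x p)) * (A p q * ((starRingEnd ℂ) (V q k) * x q))) := by
            exact (Finset.sum_congr rfl fun p _ => Finset.sum_comm).trans Finset.sum_comm
        _ = ∑ k, ((eig k : ℝ) : ℂ) * (dotProduct (star (w k)) (A *ᵥ (w k))) := by
            refine Finset.sum_congr rfl fun k _ => ?_
            rw [dotProduct, Finset.mul_sum]
            refine Finset.sum_congr rfl fun p _ => ?_
            rw [Matrix.mulVec, dotProduct, Finset.mul_sum, Finset.mul_sum]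
            refine Finset.sum_congr rfl fun q _ => ?_
            have hwp : (star (w k)) p = V p k * (starRingEnd ℂ) (x p) := by
              rw [Pi.star_apply, RCLike.star_def]
              have h0 : w k p = (starRingEnd ℂ) (V p k) * x p := rfl
              rw [h0, (starRingEnd ℂ).map_mul, Complex.conj_conj]
            rw [hwp]
    have hre : (dotProduct (star x) ((A ⊙ B) *ᵥ x)).re
        = ∑ k, eig k * (dotProduct (star (w k)) (A *ᵥ (w k))).re := by
      rw [hquad, Complex.re_sum]
      exact Finset.sum_congr rfl fun k _ => re_cast_mul _ _
    have hQnn : ∀ k, 0 ≤ (dotProduct (star (w k)) (A *ᵥ (w k))).re := by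
      intro k
      have := hA.re_dotProduct_nonneg (w k)
      simpa using this
    have hcore := core hA W hWuni x
    rw [hmr] at hcore
    have hPd : ∀ p, (B p p).re ≤ lambdaMax hB.1 * (∑ j, Complex.normSq (W p j)) := by
      intro p
      have hdiag : (B p p).re = ∑ k, eig k * Complex.normSq (V p k) := by
        have h0 := spectral_entry hB.1 p p
        have h1 : B p p = ∑ k, ((eig k * Complex.normSq (V p k) : ℝ) : ℂ) := by
          rw [h0]
          refine Finset.sum_congr rfl fun k _ => ?_
          rw [Complex.mul_conj]
          norm_cast
        rw [h1, Complex.re_sum]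
        exact Finset.sum_congr rfl fun k _ => Complex.ofReal_re _
      rw [hdiag]
      have hsub : ∑ k, eig k * Complex.normSq (V p k)
          = ∑ k ∈ Kf, eig k * Complex.normSq (V p k) := by
        refine (Finset.sum_subset (Finset.subset_univ Kf) fun k _ hk => ?_).symm
        have h2 : eig k = 0 := by
          by_contra hc
          exact hk (by rw [hKf]; exact Finset.mem_filter.mpr ⟨Finset.mem_univ k, hc⟩)
        rw [h2, zero_mul]
      rw [hsub]
      have hsum2 : ∑ j, Complex.normSq (W p j) = ∑ k ∈ Kf, Complex.normSq (V p k) := by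
        rw [hreKf (fun k => Complex.normSq (V p k))]
        exact Finset.sum_congr rfl fun j _ => by rw [hWapp]
      rw [hsum2, Finset.mul_sum]
      refine Finset.sum_le_sum fun k _ => ?_
      exact mul_le_mul_of_nonneg_right (hle_max k) (Complex.normSq_nonneg _)
    calc lambdaMinPos hB.1 * (mu (n - r + 1) A * (((⨅ i, (B i i).re) / lambdaMax hB.1)
          * ∑ p, Complex.normSq (x p)))
        ≤ lambdaMinPos hB.1 * (mu (n - r + 1) A
            * ∑ p, Complex.normSq (x p) * (∑ j, Complex.normSq (W p j))) := by
          refine mul_le_mul_of_nonneg_left ?_ (le_of_lt hlminpos)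
          refine mul_le_mul_of_nonneg_left ?_ hmu0
          calc ((⨅ i, (B i i).re) / lambdaMax hB.1) * ∑ p, Complex.normSq (x p)
              = ∑ p, Complex.normSq (x p) * ((⨅ i, (B i i).re) / lambdaMax hB.1) := by
                rw [Finset.mul_sum]
                exact Finset.sum_congr rfl fun p _ => mul_comm _ _
            _ ≤ ∑ p, Complex.normSq (x p) * (∑ j, Complex.normSq (W p j)) := by
                refine Finset.sum_le_sum fun p _ => ?_
                refine mul_le_mul_of_nonneg_left ?_ (Complex.normSq_nonneg _)
                rw [div_le_iff₀ hlmaxpos]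
                calc (⨅ i, (B i i).re) ≤ (B p p).re := hβ_le p
                  _ ≤ lambdaMax hB.1 * (∑ j, Complex.normSq (W p j)) := hPd p
                  _ = (∑ j, Complex.normSq (W p j)) * lambdaMax hB.1 := mul_comm _ _
      _ ≤ lambdaMinPos hB.1 * ∑ j, (dotProduct
            (star (fun p => (starRingEnd ℂ) (W p j) * x p))
            (A *ᵥ (fun p => (starRingEnd ℂ) (W p j) * x p))).re :=
          mul_le_mul_of_nonneg_left hcore (le_of_lt hlminpos)
      _ = ∑ j, lambdaMinPos hB.1 * (dotProduct (star (w ((e.symm j) : Fin n)))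
            (A *ᵥ (w ((e.symm j) : Fin n)))).re := by
          rw [Finset.mul_sum]
          exact Finset.sum_congr rfl fun j _ => rfl
      _ = ∑ k ∈ Kf, lambdaMinPos hB.1
            * (dotProduct (star (w k)) (A *ᵥ (w k))).re :=
          (hreKf fun k => lambdaMinPos hB.1
            * (dotProduct (star (w k)) (A *ᵥ (w k))).re).symm
      _ ≤ ∑ k ∈ Kf, eig k * (dotProduct (star (w k)) (A *ᵥ (w k))).re :=
          Finset.sum_le_sum fun k hk =>
            mul_le_mul_of_nonneg_right (hlmin_le k hk) (hQnn k)
      _ = ∑ k, eig k * (dotProduct (star (w k)) (A *ᵥ (w k))).re := by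
          refine Finset.sum_subset (Finset.subset_univ Kf) fun k _ hk => ?_
          have h2 : eig k = 0 := by
            by_contra hc
            exact hk (by rw [hKf]; exact Finset.mem_filter.mpr ⟨Finset.mem_univ k, hc⟩)
          rw [h2, zero_mul]
      _ = (dotProduct (star x) ((A ⊙ B) *ᵥ x)).re := hre.symm
  -- conclude via eigenvalues of A ⊙ B
  have : Nonempty (Fin n) := ⟨⟨0, hn⟩⟩
  refine le_ciInf fun i => ?_
  set v : Fin n → ℂ := ⇑(hAB.eigenvectorBasis i) with hv
  have hX : ∑ p, Complex.normSq (v p) = 1 := by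
    have hnorm1 : ‖hAB.eigenvectorBasis i‖ = 1 := hAB.eigenvectorBasis.orthonormal.1 i
    rw [EuclideanSpace.norm_eq] at hnorm1
    have h3 : ∑ p, ‖v p‖ ^ 2 = 1 := by
      have := Real.sqrt_eq_one.mp hnorm1
      simpa [hv] using this
    rw [← h3]
    refine Finset.sum_congr rfl fun p _ => ?_
    rw [Complex.sq_norm]
  have hmaster := master v
  rw [hX, mul_one] at hmaster
  have heq : mu (n - r + 1) A / kappaEff hB.1 * ⨅ i, (B i i).re
      = lambdaMinPos hB.1 * (mu (n - r + 1) A * ((⨅ i, (B i i).re) / lambdaMax hB.1)) := by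
    rw [kappaEff]
    field_simp
  rw [hAB.eigenvalues_eq i]
  calc mu (n - r + 1) A / kappaEff hB.1 * ⨅ i, (B i i).re
      = lambdaMinPos hB.1 * (mu (n - r + 1) A * ((⨅ i, (B i i).re) / lambdaMax hB.1)) := heq
    _ ≤ (dotProduct (star v) ((A ⊙ B) *ᵥ v)).re := hmaster
    _ = RCLike.re (dotProduct (star v) ((A ⊙ B) *ᵥ v)) := rfl
end

section
/- Let C, B ∈ M_n be Hermitian complex matrices, with B positive semidefinite and r = rank(B) ≥ 1. If μ_{n−r+1}(C) ≥ −(κ_eff(B) − 1) λ_min(C), then the Hadamard product C ∘ B is positive semidefinite. -/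
open Matrix
open scoped Matrix ComplexOrder

open Finset
open scoped ComplexOrder ComplexConjugate

namespace Stmt10Aux

/-- quadratic form as double sum -/
lemma dot_expand {N : Type*} [Fintype N] (M : Matrix N N ℂ) (v : N → ℂ) :
    star v ⬝ᵥ (M *ᵥ v) = ∑ i, ∑ j, conj (v i) * M i j * v j := by
  simp only [dotProduct, mulVec, Pi.star_apply, RCLike.star_def, Finset.mul_sum]
  exact Finset.sum_congr rfl fun i _ => Finset.sum_congr rfl fun j _ => by ring

lemma dot_self {N : Type*} [Fintype N] (v : N → ℂ) :
    star v ⬝ᵥ v = ((∑ i, Complex.normSq (v i) : ℝ) : ℂ) := by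
  push_cast
  simp only [dotProduct, Pi.star_apply, RCLike.star_def, Complex.normSq_eq_conj_mul_self]

/-- Hermitian quadratic form is real -/
lemma herm_dot_real {N : Type*} [Fintype N] {M : Matrix N N ℂ} (hM : M.IsHermitian)
    (v : N → ℂ) : star v ⬝ᵥ (M *ᵥ v) = (((star v ⬝ᵥ (M *ᵥ v)).re : ℝ) : ℂ) := by
  refine (Complex.conj_eq_iff_re.mp ?_).symm
  rw [dot_expand, map_sum, Finset.sum_comm]
  refine Finset.sum_congr rfl fun i _ => ?_
  rw [map_sum]
  refine Finset.sum_congr rfl fun j _ => ?_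
  have h : (starRingEnd ℂ) (M i j) = M j i := by
    rw [← RCLike.star_def]; exact hM.apply j i
  rw [_root_.map_mul, _root_.map_mul, h, Complex.conj_conj]
  ring

/-- Rayleigh lower bound from eigenvalue lower bounds -/
lemma rayleigh {N : Type*} [Fintype N] [DecidableEq N] {M : Matrix N N ℂ}
    (hM : M.IsHermitian) {c : ℝ} (hc : ∀ i, c ≤ hM.eigenvalues i) (v : N → ℂ) :
    c * ∑ i, Complex.normSq (v i) ≤ (star v ⬝ᵥ (M *ᵥ v)).re := by
  classical
  set U : Matrix N N ℂ := (hM.eigenvectorUnitary : Matrix N N ℂ) with hU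
  have hpsd : (M - (c : ℂ) • 1).PosSemidef := by
    have hd : (Matrix.diagonal (fun i => ((hM.eigenvalues i - c : ℝ) : ℂ))).PosSemidef :=
      Matrix.PosSemidef.diagonal fun i => by
        rw [Pi.zero_apply]
        exact Complex.zero_le_real.mpr (by linarith [hc i])
    have h2 := hd.mul_mul_conjTranspose_same U
    have hspec : M = U * Matrix.diagonal (RCLike.ofReal ∘ hM.eigenvalues) * Uᴴ := by
      have := hM.spectral_theorem
      rwa [Unitary.conjStarAlgAut_apply, Matrix.star_eq_conjTranspose] at this
    have hUU : U * Uᴴ = 1 := by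
      rw [← Matrix.star_eq_conjTranspose]
      exact Matrix.mem_unitaryGroup_iff.mp (hM.eigenvectorUnitary).2
    have hdd : Matrix.diagonal (fun i => ((hM.eigenvalues i - c : ℝ) : ℂ))
        = Matrix.diagonal (RCLike.ofReal ∘ hM.eigenvalues) - (c : ℂ) • 1 := by
      ext i j
      by_cases h : i = j <;>
        simp [Matrix.diagonal, h, Matrix.one_apply, Complex.ofReal_sub]
    have h3 : U * Matrix.diagonal (fun i => ((hM.eigenvalues i - c : ℝ) : ℂ)) * Uᴴ
        = M - (c : ℂ) • 1 := by
      rw [hdd, Matrix.mul_sub, Matrix.sub_mul, ← hspec]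
      congr 1
      rw [Matrix.mul_smul, Matrix.mul_one, Matrix.smul_mul, hUU]
    rw [← h3]; exact h2
  have h4 := hpsd.dotProduct_mulVec_nonneg v
  rw [Matrix.sub_mulVec, dotProduct_sub, Matrix.smul_mulVec, Matrix.one_mulVec,
    dotProduct_smul, dot_self] at h4
  have h6 : (c : ℂ) • ((∑ i, Complex.normSq (v i) : ℝ) : ℂ)
      = (((c * ∑ i, Complex.normSq (v i) : ℝ)) : ℂ) := by
    rw [smul_eq_mul]; push_cast; ring
  rw [h6] at h4
  rw [Complex.nonneg_iff] at h4
  have h5 := h4.1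
  rw [Complex.sub_re, Complex.ofReal_re] at h5
  linarith

/-- extension of a vector along an injection -/
noncomputable def extend {κ N : Type*} [Fintype κ] [DecidableEq N] (f : κ → N)
    (w : κ → ℂ) : N → ℂ := fun i => ∑ a, if i = f a then w a else 0

lemma collapse {κ N : Type*} [Fintype κ] [Fintype N] [DecidableEq N] (f : κ → N)
    (w : κ → ℂ) (F : N → ℂ) : ∑ j, F j * extend f w j = ∑ b, F (f b) * w b := by
  unfold extend
  simp only [Finset.mul_sum]
  rw [Finset.sum_comm]
  refine Finset.sum_congr rfl fun b _ => ?_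
  simp only [mul_ite, mul_zero]
  exact Finset.sum_ite_eq' univ (f b) (fun j => F j * w b) |>.trans (by simp)

lemma conj_extend {κ N : Type*} [Fintype κ] [DecidableEq N] (f : κ → N)
    (w : κ → ℂ) (i : N) : conj (extend f w i) = extend f (fun a => conj (w a)) i := by
  unfold extend
  rw [map_sum]
  exact Finset.sum_congr rfl fun a _ => by rw [apply_ite conj, map_zero]

lemma extend_qform {κ N : Type*} [Fintype κ] [Fintype N] [DecidableEq N] (f : κ → N)
    (w : κ → ℂ) (Φ : Matrix N N ℂ) :
    star (extend f w) ⬝ᵥ (Φ *ᵥ extend f w)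
      = star w ⬝ᵥ ((Φ.submatrix f f) *ᵥ w) := by
  rw [dot_expand, dot_expand]
  have h1 : ∀ i, ∑ j, conj (extend f w i) * Φ i j * extend f w j
      = conj (extend f w i) * ∑ j, Φ i j * extend f w j := by
    intro i; rw [Finset.mul_sum]; exact Finset.sum_congr rfl fun j _ => by ring
  calc ∑ i, ∑ j, conj (extend f w i) * Φ i j * extend f w j
      = ∑ i, (∑ b, Φ i (f b) * w b) * extend f (fun a => conj (w a)) i := by
        refine Finset.sum_congr rfl fun i _ => ?_
        rw [h1 i, collapse f w (fun j => Φ i j), conj_extend]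
        ring
    _ = ∑ a, (∑ b, Φ (f a) (f b) * w b) * conj (w a) :=
        collapse f (fun a => conj (w a)) (fun i => ∑ b, Φ i (f b) * w b)
    _ = ∑ a, ∑ b, conj (w a) * (Φ.submatrix f f) a b * w b := by
        refine Finset.sum_congr rfl fun a _ => ?_
        rw [Finset.sum_mul]
        exact Finset.sum_congr rfl fun b _ => by simp [Matrix.submatrix_apply]; ring

lemma extend_eq_self {κ N : Type*} [Fintype κ] [DecidableEq N] {f : κ → N}
    (hf : Function.Injective f) {v : N → ℂ} (hv : ∀ i, (¬ ∃ a, f a = i) → v i = 0) :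
    extend f (fun a => v (f a)) = v := by
  funext i
  unfold extend
  by_cases hi : ∃ a, f a = i
  · obtain ⟨a₀, ha₀⟩ := hi
    rw [Finset.sum_eq_single a₀]
    · simp [ha₀]
    · intro b _ hb
      have : i ≠ f b := by rw [← ha₀]; exact fun h => hb (hf h.symm)
      simp [this]
    · simp
  · rw [hv i hi, Finset.sum_eq_zero]
    intro a _
    have : i ≠ f a := fun h => hi ⟨a, h.symm⟩
    simp [this]

/-- Cauchy–Binet, symmetrized over all (not nec. injective) index tuples. -/
lemma cauchy_binet {κ N : Type*} [Fintype κ] [DecidableEq κ] [Fintype N] [DecidableEq N]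
    (P Q : Matrix N κ ℂ) :
    ∑ g : κ → N, conj ((P.submatrix g id).det) * (Q.submatrix g id).det
      = (Nat.factorial (Fintype.card κ) : ℂ) * (Pᴴ * Q).det := by
  classical
  set F := (Matrix.detRowAlternating (R := ℂ) (n := κ)).toMultilinearMap with hF
  -- step 1: multilinear expansion of det (Pᴴ * Q)
  have expand : (Pᴴ * Q).det
      = ∑ g : κ → N, (∏ a, conj (P (g a) a)) * (Q.submatrix g id).det := by
    have hrows : (fun a => (Pᴴ * Q) a) = fun a => ∑ k, conj (P k a) • (fun b => Q k b) := by
      funext a b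
      simp only [Matrix.mul_apply, Matrix.conjTranspose_apply, Finset.sum_apply,
        Pi.smul_apply, smul_eq_mul, RCLike.star_def]
    have h0 : (Pᴴ * Q).det = F (fun a => (Pᴴ * Q) a) := rfl
    rw [h0, hrows, F.map_sum (fun a k => conj (P k a) • (fun b => Q k b))]
    refine Finset.sum_congr rfl fun g _ => ?_
    rw [F.map_smul_univ (fun a => conj (P (g a) a)) (fun a => (fun b => Q (g a) b))]
    rw [smul_eq_mul]
    rfl
  -- step 2: expand conj det P[g] via permutations and symmetrize
  have hL : ∑ g : κ → N, conj ((P.submatrix g id).det) * (Q.submatrix g id).det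
      = ∑ σ : Equiv.Perm κ, ∑ g : κ → N,
          ((Equiv.Perm.sign σ : ℤ) : ℂ) * (∏ a, conj (P (g (σ a)) a)) * (Q.submatrix g id).det := by
    rw [Finset.sum_comm]
    refine Finset.sum_congr rfl fun g _ => ?_
    have hdet : conj ((P.submatrix g id).det)
        = ∑ σ : Equiv.Perm κ, ((Equiv.Perm.sign σ : ℤ) : ℂ) * ∏ a, conj (P (g (σ a)) a) := by
      rw [Matrix.det_apply', map_sum]
      refine Finset.sum_congr rfl fun σ _ => ?_
      rw [_root_.map_mul, map_intCast, map_prod]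
      simp [Matrix.submatrix_apply]
    rw [hdet, Finset.sum_mul]
  rw [hL]
  have hσ : ∀ σ : Equiv.Perm κ,
      ∑ g : κ → N, ((Equiv.Perm.sign σ : ℤ) : ℂ) * (∏ a, conj (P (g (σ a)) a))
          * (Q.submatrix g id).det
      = ∑ h : κ → N, (∏ a, conj (P (h a) a)) * (Q.submatrix h id).det := by
    intro σ
    set e : (κ → N) ≃ (κ → N) := Equiv.piCongrLeft' (fun _ => N) σ with hee
    rw [← Equiv.sum_comp e (fun g => ((Equiv.Perm.sign σ : ℤ) : ℂ)
      * (∏ a, conj (P (g (σ a)) a)) * (Q.submatrix g id).det)]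
    refine Finset.sum_congr rfl fun h _ => ?_
    have h1 : (∏ a, conj (P ((e h) (σ a)) a)) = ∏ a, conj (P (h a) a) := by
      refine Finset.prod_congr rfl fun a _ => ?_
      have : (e h) (σ a) = h a := by
        show h (σ.symm (σ a)) = h a
        rw [Equiv.symm_apply_apply]
      rw [this]
    have h2 : (Q.submatrix (e h) id).det
        = ((Equiv.Perm.sign σ : ℤ) : ℂ) * (Q.submatrix h id).det := by
      have hQ : Q.submatrix (e h) id = (Q.submatrix h id).submatrix (⇑σ.symm) id := by
        ext a b; rfl
      rw [hQ, Matrix.det_permute]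
      have : Equiv.Perm.sign σ.symm = Equiv.Perm.sign σ := Equiv.Perm.sign_symm σ
      rw [this]
    rw [h1, h2]
    have hs : ((Equiv.Perm.sign σ : ℤ) : ℂ) * ((Equiv.Perm.sign σ : ℤ) : ℂ) = 1 := by
      have h3 : ((Equiv.Perm.sign σ : ℤ) * (Equiv.Perm.sign σ : ℤ) : ℤ) = 1 := by
        rw [← Units.val_mul, Int.units_mul_self]; rfl
      exact_mod_cast h3
    calc ((Equiv.Perm.sign σ : ℤ) : ℂ) * (∏ a, conj (P (h a) a))
          * (((Equiv.Perm.sign σ : ℤ) : ℂ) * (Q.submatrix h id).det)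
        = (((Equiv.Perm.sign σ : ℤ) : ℂ) * ((Equiv.Perm.sign σ : ℤ) : ℂ))
            * ((∏ a, conj (P (h a) a)) * (Q.submatrix h id).det) := by ring
      _ = (∏ a, conj (P (h a) a)) * (Q.submatrix h id).det := by rw [hs, one_mul]
  calc ∑ σ : Equiv.Perm κ, ∑ g : κ → N,
          ((Equiv.Perm.sign σ : ℤ) : ℂ) * (∏ a, conj (P (g (σ a)) a)) * (Q.submatrix g id).det
      = ∑ _σ : Equiv.Perm κ, ∑ h : κ → N,
          (∏ a, conj (P (h a) a)) * (Q.submatrix h id).det :=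
        Finset.sum_congr rfl fun σ _ => hσ σ
    _ = (Fintype.card (Equiv.Perm κ) : ℂ) * ∑ h : κ → N,
          (∏ a, conj (P (h a) a)) * (Q.submatrix h id).det := by
        rw [Finset.sum_const, nsmul_eq_mul]
        rfl
    _ = (Nat.factorial (Fintype.card κ) : ℂ) * (Pᴴ * Q).det := by
        rw [Fintype.card_perm, expand]

lemma real_mul_nonneg_complex {r : ℝ} {z : ℂ} (hr : 0 ≤ r) (hz : 0 ≤ z) :
    0 ≤ (r : ℂ) * z := by
  rw [Complex.nonneg_iff] at hz ⊢
  constructor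
  · simp only [Complex.mul_re, Complex.ofReal_re, Complex.ofReal_im, zero_mul, sub_zero]
    exact mul_nonneg hr hz.1
  · simp only [Complex.mul_im, Complex.ofReal_re, Complex.ofReal_im, zero_mul, add_zero,
      ← hz.2, mul_zero]

/-- The key "factor width" decomposition bound. -/
lemma crux {n q : ℕ} (C' : Matrix (Fin n) (Fin n) ℂ)
    (hq : ∀ f : Fin (q + 1) → Fin n, Function.Injective f → ∀ w : Fin (q + 1) → ℂ,
      0 ≤ star w ⬝ᵥ ((C'.submatrix f f) *ᵥ w))
    (Y : Matrix (Fin n) (Fin q) ℂ) (hY : Yᴴ * Y = 1) (x : Fin n → ℂ) :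
    0 ≤ ∑ i, ∑ j, conj (x i) * x j * C' i j
        * ((1 : Matrix (Fin n) (Fin n) ℂ) i j - (Y * Yᴴ) i j) := by
  classical
  set κ := (Fin 1 ⊕ Fin q) with hκ
  have hcard : Fintype.card κ = q + 1 := by simp [hκ, add_comm]
  set e : κ ≃ Fin (q + 1) := Fintype.equivOfCardEq (by rw [hcard]; simp) with he
  set W : Fin n → Matrix (Fin n) κ ℂ :=
    fun i => Matrix.of fun a c =>
      Sum.elim (fun _ : Fin 1 => if a = i then (1 : ℂ) else 0) (fun k => Y a k) c with hW
  -- mini determinant computation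
  have minidet : ∀ i j, ((W i)ᴴ * (W j)).det
      = (1 : Matrix (Fin n) (Fin n) ℂ) i j - (Y * Yᴴ) i j := by
    intro i j
    have hblocks : (W i)ᴴ * (W j) = Matrix.fromBlocks
        (Matrix.of fun _ _ => (1 : Matrix (Fin n) (Fin n) ℂ) i j)
        (Matrix.of fun _ k => Y i k)
        (Matrix.of fun k _ => conj (Y j k)) (1 : Matrix (Fin q) (Fin q) ℂ) := by
      ext a b
      cases a with
      | inl a0 => cases b with
        | inl b0 =>
          simp only [Matrix.mul_apply, Matrix.conjTranspose_apply, hW, Matrix.of_apply,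
            Sum.elim_inl, Matrix.fromBlocks_apply₁₁, Matrix.one_apply, RCLike.star_def]
          rw [Finset.sum_eq_single i]
          · simp
          · intro t _ ht; simp [ht]
          · simp
        | inr k =>
          simp only [Matrix.mul_apply, Matrix.conjTranspose_apply, hW, Matrix.of_apply,
            Sum.elim_inl, Sum.elim_inr, Matrix.fromBlocks_apply₁₂, RCLike.star_def]
          rw [Finset.sum_eq_single i]
          · simp
          · intro t _ ht; simp [ht]
          · simp
      | inr k => cases b with
        | inl b0 =>
          simp only [Matrix.mul_apply, Matrix.conjTranspose_apply, hW, Matrix.of_apply,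
            Sum.elim_inl, Sum.elim_inr, Matrix.fromBlocks_apply₂₁, RCLike.star_def]
          rw [Finset.sum_eq_single j]
          · simp
          · intro t _ ht; simp [ht]
          · simp
        | inr l =>
          have := congrFun (congrFun hY k) l
          simp only [Matrix.mul_apply, Matrix.conjTranspose_apply, hW, Matrix.of_apply,
            Sum.elim_inr, Matrix.fromBlocks_apply₂₂, RCLike.star_def] at this ⊢
          exact this
    rw [hblocks, Matrix.det_fromBlocks_one₂₂, Matrix.det_unique]
    simp only [Matrix.sub_apply, Matrix.of_apply, Matrix.mul_apply, Matrix.one_apply,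
      Matrix.conjTranspose_apply, RCLike.star_def]
  -- the cofactor vectors
  set v : (κ → Fin n) → Fin n → ℂ :=
    fun g i => x i * ((W i).submatrix g id).det with hv
  -- each term is nonnegative
  have term_nonneg : ∀ g : κ → Fin n, 0 ≤ star (v g) ⬝ᵥ (C' *ᵥ (v g)) := by
    intro g
    by_cases hg : Function.Injective g
    · set f : Fin (q + 1) → Fin n := g ∘ e.symm with hf
      have hfinj : Function.Injective f := hg.comp e.symm.injective
      have hsupp : ∀ i, (¬ ∃ p, f p = i) → v g i = 0 := by
        intro i hi
        have hzero : ∀ a : κ, ((W i).submatrix g id) a (Sum.inl 0) = 0 := by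
          intro a
          have : g a ≠ i := fun h => hi ⟨e a, by simp [hf, h]⟩
          simp [hW, this]
        simp only [hv]
        rw [Matrix.det_eq_zero_of_column_eq_zero (Sum.inl 0) hzero, mul_zero]
      have hext : extend f (fun p => v g (f p)) = v g := extend_eq_self hfinj hsupp
      have := extend_qform f (fun p => v g (f p)) C'
      rw [hext] at this
      rw [this]
      exact hq f hfinj _
    · have hvz : v g = 0 := by
        rw [Function.not_injective_iff] at hg
        obtain ⟨a, b, hab, hne⟩ := hg
        funext i
        have hrows : ((W i).submatrix g id) a = ((W i).submatrix g id) b := by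
          funext c; simp [Matrix.submatrix_apply, hab]
        simp only [hv, Pi.zero_apply]
        rw [Matrix.det_zero_of_row_eq hne hrows, mul_zero]
      rw [hvz]
      simp
  -- Cauchy–Binet assembly
  have key : ((q + 1).factorial : ℂ) * (∑ i, ∑ j, conj (x i) * x j * C' i j
        * ((1 : Matrix (Fin n) (Fin n) ℂ) i j - (Y * Yᴴ) i j))
      = ∑ g : κ → Fin n, star (v g) ⬝ᵥ (C' *ᵥ (v g)) := by
    have hrhs : ∀ g : κ → Fin n, star (v g) ⬝ᵥ (C' *ᵥ (v g))
        = ∑ i, ∑ j, (conj (x i) * x j * C' i j)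
            * (conj (((W i).submatrix g id).det) * ((W j).submatrix g id).det) := by
      intro g
      rw [dot_expand]
      refine Finset.sum_congr rfl fun i _ => Finset.sum_congr rfl fun j _ => ?_
      simp only [hv, _root_.map_mul]
      ring
    calc ((q + 1).factorial : ℂ) * (∑ i, ∑ j, conj (x i) * x j * C' i j
          * ((1 : Matrix (Fin n) (Fin n) ℂ) i j - (Y * Yᴴ) i j))
        = ∑ i, ∑ j, (conj (x i) * x j * C' i j)
            * (∑ g : κ → Fin n, conj (((W i).submatrix g id).det)
                * ((W j).submatrix g id).det) := by
          rw [Finset.mul_sum]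
          refine Finset.sum_congr rfl fun i _ => ?_
          rw [Finset.mul_sum]
          refine Finset.sum_congr rfl fun j _ => ?_
          rw [cauchy_binet (W i) (W j), minidet i j, hcard]
          ring
      _ = ∑ i, ∑ j, ∑ g : κ → Fin n, (conj (x i) * x j * C' i j)
            * (conj (((W i).submatrix g id).det) * ((W j).submatrix g id).det) := by
          refine Finset.sum_congr rfl fun i _ => Finset.sum_congr rfl fun j _ => ?_
          rw [Finset.mul_sum]
      _ = ∑ i, ∑ g : κ → Fin n, ∑ j, (conj (x i) * x j * C' i j)
            * (conj (((W i).submatrix g id).det) * ((W j).submatrix g id).det) :=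
          Finset.sum_congr rfl fun i _ => Finset.sum_comm
      _ = ∑ g : κ → Fin n, ∑ i, ∑ j, (conj (x i) * x j * C' i j)
            * (conj (((W i).submatrix g id).det) * ((W j).submatrix g id).det) :=
          Finset.sum_comm
      _ = ∑ g : κ → Fin n, star (v g) ⬝ᵥ (C' *ᵥ (v g)) :=
          Finset.sum_congr rfl fun g _ => (hrhs g).symm
  -- conclude
  have h0 : 0 ≤ ((q + 1).factorial : ℂ) * (∑ i, ∑ j, conj (x i) * x j * C' i j
        * ((1 : Matrix (Fin n) (Fin n) ℂ) i j - (Y * Yᴴ) i j)) := by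
    rw [key]
    exact Finset.sum_nonneg fun g _ => term_nonneg g
  set S := ∑ i, ∑ j, conj (x i) * x j * C' i j
      * ((1 : Matrix (Fin n) (Fin n) ℂ) i j - (Y * Yᴴ) i j) with hS
  have hc : ((q + 1).factorial : ℂ) = (((q + 1).factorial : ℝ) : ℂ) := by push_cast; rfl
  rw [hc] at h0
  have hkpos : (0 : ℝ) < ((q + 1).factorial : ℝ) := by positivity
  rw [Complex.nonneg_iff] at h0 ⊢
  simp only [Complex.mul_re, Complex.mul_im, Complex.ofReal_re, Complex.ofReal_im,
    zero_mul, sub_zero, add_zero] at h0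
  constructor
  · nlinarith [h0.1]
  · rcases mul_eq_zero.mp h0.2.symm with h | h
    · exact absurd h (ne_of_gt hkpos)
    · exact h.symm

lemma submatrix_one_inj {κ N : Type*} [DecidableEq κ] [DecidableEq N] {f : κ → N}
    (hf : Function.Injective f) : (1 : Matrix N N ℂ).submatrix f f = 1 := by
  ext a b
  simp [Matrix.submatrix_apply, Matrix.one_apply, hf.eq_iff]

lemma extend_normSq {κ N : Type*} [Fintype κ] [Fintype N] [DecidableEq N] [DecidableEq κ]
    {f : κ → N} (hf : Function.Injective f) (w : κ → ℂ) :
    ∑ i, Complex.normSq (extend f w i) = ∑ a, Complex.normSq (w a) := by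
  have h := extend_qform f w (1 : Matrix N N ℂ)
  rw [Matrix.one_mulVec, submatrix_one_inj hf, Matrix.one_mulVec, dot_self, dot_self] at h
  exact_mod_cast h

lemma eig_rayleigh {N : Type*} [Fintype N] [DecidableEq N] {M : Matrix N N ℂ}
    (hM : M.IsHermitian) (i : N) :
    ∃ w : N → ℂ, (∑ a, Complex.normSq (w a)) = 1
      ∧ hM.eigenvalues i = (star w ⬝ᵥ (M *ᵥ w)).re := by
  refine ⟨⇑(hM.eigenvectorBasis i), ?_, ?_⟩
  · have hnorm : ‖hM.eigenvectorBasis i‖ = 1 := hM.eigenvectorBasis.orthonormal.1 i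
    have heq := EuclideanSpace.norm_eq (hM.eigenvectorBasis i)
    rw [hnorm] at heq
    have hnn : (0:ℝ) ≤ ∑ a, ‖(hM.eigenvectorBasis i) a‖ ^ 2 := by positivity
    have h2 : (∑ a, ‖(hM.eigenvectorBasis i) a‖ ^ 2) = 1 := by
      nlinarith [Real.sq_sqrt hnn]
    rw [← h2]
    refine Finset.sum_congr rfl fun a _ => ?_
    rw [← Complex.sq_norm]
  · have := hM.eigenvalues_eq i
    simpa [RCLike.re_to_complex] using this

end Stmt10Aux

set_option maxHeartbeats 1000000 in
open Stmt10Aux in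
/-- **Corollary.** Let `C, B` be Hermitian with `B` positive semidefinite and `r = rank B ≥ 1`.
If `μ_{n-r+1}(C) ≥ -(κ_eff(B) - 1) λ_min(C)`, then `C ⊙ B` is positive semidefinite. -/
theorem stmt_10 {n : ℕ} (C B : Matrix (Fin n) (Fin n) ℂ) (hC : C.IsHermitian)
    (hB : B.PosSemidef) (r : ℕ) (hr : r = B.rank) (hr1 : 1 ≤ r)
    (hmu : mu (n - r + 1) C ≥ -(kappaEff hB.1 - 1) * lambdaMin hC) :
    (C ⊙ B).PosSemidef := by
  classical
  -- Hermitian part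
  have hherm : (C ⊙ B).IsHermitian := by
    ext i j
    rw [Matrix.conjTranspose_apply, Matrix.hadamard_apply, Matrix.hadamard_apply]
    rw [star_mul']
    rw [hC.apply i j, hB.1.apply i j]
    try ring
  refine Matrix.PosSemidef.of_dotProduct_mulVec_nonneg hherm fun x => ?_
  -- context
  set lam : Fin n → ℝ := hB.1.eigenvalues with hlamdef
  set U : Matrix (Fin n) (Fin n) ℂ := (hB.1.eigenvectorUnitary : Matrix (Fin n) (Fin n) ℂ)
    with hUdef
  set z : Fin n → Fin n → ℂ := fun k i => conj (U i k) * x i with hzdef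
  set lmin := lambdaMin hC with hlmin
  set l1 := lambdaMax hB.1 with hl1
  set lr := lambdaMinPos hB.1 with hlr
  set μ := mu (n - r + 1) C with hmudef
  set η := min lmin 0 with heta
  set C' : Matrix (Fin n) (Fin n) ℂ := C - (μ : ℂ) • 1 with hC'def
  -- basic facts about B's eigenvalues
  have F1 : ∀ k, 0 ≤ lam k := fun k => hB.eigenvalues_nonneg k
  have hrankcard : r = Fintype.card {k // lam k ≠ 0} := by
    rw [hr, hB.1.rank_eq_card_non_zero_eigs]
  have hrn : r ≤ n := by
    rw [hr]
    simpa using Matrix.rank_le_card_width B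
  have F2 : ∀ k, lam k ≤ l1 := fun k =>
    le_ciSup (Set.Finite.bddAbove (Set.finite_range lam)) k
  have hSfin : ({t : ℝ | (∃ i, lam i = t) ∧ 0 < t}).Finite :=
    Set.Finite.subset (Set.finite_range lam) (fun t ht => ht.1)
  have hex : ∃ k, lam k ≠ 0 := by
    have : 0 < Fintype.card {k // lam k ≠ 0} := by omega
    obtain ⟨⟨k, hk⟩⟩ := Fintype.card_pos_iff.mp this
    exact ⟨k, hk⟩
  obtain ⟨k0, hk0⟩ := hex
  have hk0pos : 0 < lam k0 := lt_of_le_of_ne (F1 k0) (Ne.symm hk0)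
  have hSne : ({t : ℝ | (∃ i, lam i = t) ∧ 0 < t}).Nonempty := ⟨lam k0, ⟨k0, rfl⟩, hk0pos⟩
  have hlrmem : lr ∈ {t : ℝ | (∃ i, lam i = t) ∧ 0 < t} := Set.Nonempty.csInf_mem hSne hSfin
  have F3 : 0 < lr := hlrmem.2
  have F4 : ∀ k, lam k ≠ 0 → lr ≤ lam k := fun k hk =>
    csInf_le (Set.Finite.bddBelow hSfin) ⟨⟨k, rfl⟩, lt_of_le_of_ne (F1 k) (Ne.symm hk)⟩
  have F5 : lr ≤ l1 := by
    obtain ⟨⟨i0, hi0⟩, _⟩ := hlrmem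
    rw [← hi0]
    exact F2 i0
  -- facts about C's eigenvalues
  have F6 : ∀ i, lmin ≤ hC.eigenvalues i := fun i =>
    ciInf_le (Set.Finite.bddBelow (Set.finite_range hC.eigenvalues)) i
  -- facts about mu
  have M1 : ∀ t ∈ {t : ℝ | ∃ f : Fin (n - r + 1) → Fin n, Function.Injective f ∧
      ∃ h : (C.submatrix f f).IsHermitian, ∃ i : Fin (n - r + 1), t = h.eigenvalues i},
      lmin ≤ t := by
    rintro t ⟨f, hfinj, hsub, i, rfl⟩
    obtain ⟨w, hw1, hw2⟩ := eig_rayleigh hsub i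
    rw [hw2]
    have h3 := extend_qform f w C
    have h4 := rayleigh hC F6 (extend f w)
    rw [extend_normSq hfinj, hw1, mul_one] at h4
    rw [h3] at h4
    exact h4
  have M2 : BddBelow {t : ℝ | ∃ f : Fin (n - r + 1) → Fin n, Function.Injective f ∧
      ∃ h : (C.submatrix f f).IsHermitian, ∃ i : Fin (n - r + 1), t = h.eigenvalues i} :=
    ⟨lmin, M1⟩
  have M3 : ∀ f : Fin (n - r + 1) → Fin n, Function.Injective f → ∀ w : Fin (n - r + 1) → ℂ,
      μ * ∑ a, Complex.normSq (w a) ≤ (star w ⬝ᵥ ((C.submatrix f f) *ᵥ w)).re := by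
    intro f hfinj w
    refine rayleigh (hC.submatrix f) ?_ w
    intro i
    exact csInf_le M2 ⟨f, hfinj, hC.submatrix f, i, rfl⟩
  have M4 : lmin ≤ μ := by
    have hmn : n - r + 1 ≤ n := by omega
    set f0 : Fin (n - r + 1) → Fin n := fun p => ⟨p.1, lt_of_lt_of_le p.2 hmn⟩ with hf0
    have hf0inj : Function.Injective f0 := by
      intro a b hab
      simp only [hf0, Fin.mk.injEq] at hab
      exact Fin.ext hab
    refine le_csInf ⟨(hC.submatrix f0).eigenvalues ⟨0, by omega⟩,
      f0, hf0inj, hC.submatrix f0, ⟨0, by omega⟩, rfl⟩ M1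
  -- the crux hypothesis
  have hq : ∀ f : Fin (n - r + 1) → Fin n, Function.Injective f → ∀ w : Fin (n - r + 1) → ℂ,
      0 ≤ star w ⬝ᵥ ((C'.submatrix f f) *ᵥ w) := by
    intro f hfinj w
    have hsub1 : ((μ : ℂ) • (1 : Matrix (Fin n) (Fin n) ℂ)).submatrix f f
        = (μ : ℂ) • (1 : Matrix (Fin (n - r + 1)) (Fin (n - r + 1)) ℂ) := by
      ext a b
      simp [Matrix.submatrix_apply, Matrix.one_apply, hfinj.eq_iff]
    have hCsub : C'.submatrix f f = C.submatrix f f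
        - (μ : ℂ) • (1 : Matrix (Fin (n - r + 1)) (Fin (n - r + 1)) ℂ) := by
      ext a b
      simp [hC'def, Matrix.sub_apply, Matrix.submatrix_apply, Matrix.one_apply, hfinj.eq_iff]
    have hq2 := M3 f hfinj w
    have hherm2 : (C.submatrix f f).IsHermitian := hC.submatrix f
    have hreal := herm_dot_real hherm2 w
    rw [hCsub, Matrix.sub_mulVec, dotProduct_sub, Matrix.smul_mulVec,
      Matrix.one_mulVec, dotProduct_smul, dot_self, smul_eq_mul]
    rw [hreal]
    have hcast : ((μ : ℂ) * ((∑ a, Complex.normSq (w a) : ℝ) : ℂ))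
        = (((μ * ∑ a, Complex.normSq (w a) : ℝ)) : ℂ) := by push_cast; ring
    rw [hcast, ← Complex.ofReal_sub]
    exact Complex.zero_le_real.mpr (by linarith)
  -- kernel eigenvector matrix
  have hcardZ : Fintype.card {k // lam k = 0} = n - r := by
    have h1 : Fintype.card {k // ¬ lam k ≠ 0} = n - r := by
      rw [Fintype.card_subtype_compl, ← hrankcard, Fintype.card_fin]
    rw [← h1]
    exact Fintype.card_congr (Equiv.subtypeEquivRight (fun k => by simp))
  set eZ : Fin (n - r) ≃ {k // lam k = 0} :=
    Fintype.equivOfCardEq (by rw [hcardZ, Fintype.card_fin]) with heZ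
  set Y : Matrix (Fin n) (Fin (n - r)) ℂ := Matrix.of fun i t => U i (eZ t).1 with hYdef
  have hUU : U * Uᴴ = 1 := by
    rw [← Matrix.star_eq_conjTranspose]
    exact Matrix.mem_unitaryGroup_iff.mp (hB.1.eigenvectorUnitary).2
  have hUU2 : Uᴴ * U = 1 := by
    rw [← Matrix.star_eq_conjTranspose]
    exact Matrix.mem_unitaryGroup_iff'.mp (hB.1.eigenvectorUnitary).2
  have hYorth : Yᴴ * Y = 1 := by
    ext s t
    have h1 := congrFun (congrFun hUU2 (eZ s).1) (eZ t).1
    simp only [Matrix.mul_apply, Matrix.conjTranspose_apply, hYdef, Matrix.of_apply,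
      Matrix.one_apply] at h1 ⊢
    rw [h1]
    by_cases hst : s = t
    · simp [hst]
    · have hne : (eZ s).1 ≠ (eZ t).1 := by
        intro hcontra
        exact hst (eZ.injective (Subtype.ext hcontra))
      simp [hst, hne]
  have hYY : ∀ i j, (Y * Yᴴ) i j
      = ∑ k ∈ univ.filter (fun k => lam k = 0), U i k * conj (U j k) := by
    intro i j
    rw [Finset.sum_subtype (p := fun k => lam k = 0) (univ.filter fun k => lam k = 0)
      (fun k => by simp) (fun k => U i k * conj (U j k))]
    rw [← Equiv.sum_comp eZ (fun s => U i s.1 * conj (U j s.1))]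
    simp [Matrix.mul_apply, Matrix.conjTranspose_apply, hYdef, RCLike.star_def]
  have hGK : ∀ i j, ∑ k ∈ univ.filter (fun k => ¬ lam k = 0), U i k * conj (U j k)
      = (1 : Matrix (Fin n) (Fin n) ℂ) i j - (Y * Yᴴ) i j := by
    intro i j
    have hsplit := Finset.sum_filter_add_sum_filter_not univ (fun k => lam k = 0)
      (fun k => U i k * conj (U j k))
    have huniv : ∑ k, U i k * conj (U j k) = (1 : Matrix (Fin n) (Fin n) ℂ) i j := by
      have := congrFun (congrFun hUU i) j
      simpa [Matrix.mul_apply, Matrix.conjTranspose_apply, RCLike.star_def] using this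
    rw [huniv] at hsplit
    rw [hYY]
    linear_combination hsplit
  -- crux applied
  have hcrux := crux C' hq Y hYorth x
  set Pf := univ.filter (fun k => ¬ lam k = 0) with hPf
  -- link T with crux sum
  have hT : ∑ k ∈ Pf, (star (z k) ⬝ᵥ (C' *ᵥ z k))
      = ∑ i, ∑ j, conj (x i) * x j * C' i j
          * ((1 : Matrix (Fin n) (Fin n) ℂ) i j - (Y * Yᴴ) i j) := by
    have h1 : ∀ k, star (z k) ⬝ᵥ (C' *ᵥ z k)
        = ∑ i, ∑ j, (conj (x i) * x j * C' i j) * (U i k * conj (U j k)) := by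
      intro k
      rw [dot_expand]
      refine Finset.sum_congr rfl fun i _ => Finset.sum_congr rfl fun j _ => ?_
      simp only [hzdef, _root_.map_mul, Complex.conj_conj]
      ring
    calc ∑ k ∈ Pf, (star (z k) ⬝ᵥ (C' *ᵥ z k))
        = ∑ k ∈ Pf, ∑ i, ∑ j, (conj (x i) * x j * C' i j) * (U i k * conj (U j k)) :=
          Finset.sum_congr rfl fun k _ => h1 k
      _ = ∑ i, ∑ k ∈ Pf, ∑ j, (conj (x i) * x j * C' i j) * (U i k * conj (U j k)) :=
          Finset.sum_comm
      _ = ∑ i, ∑ j, ∑ k ∈ Pf, (conj (x i) * x j * C' i j) * (U i k * conj (U j k)) :=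
          Finset.sum_congr rfl fun i _ => Finset.sum_comm
      _ = ∑ i, ∑ j, (conj (x i) * x j * C' i j) * ∑ k ∈ Pf, (U i k * conj (U j k)) := by
          refine Finset.sum_congr rfl fun i _ => Finset.sum_congr rfl fun j _ => ?_
          rw [Finset.mul_sum]
      _ = ∑ i, ∑ j, conj (x i) * x j * C' i j
            * ((1 : Matrix (Fin n) (Fin n) ℂ) i j - (Y * Yᴴ) i j) := by
          refine Finset.sum_congr rfl fun i _ => Finset.sum_congr rfl fun j _ => ?_
          rw [hGK i j]
  -- real bookkeeping
  set a : Fin n → ℝ := fun k => (star (z k) ⬝ᵥ (C *ᵥ z k)).re with hadef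
  set ns : Fin n → ℝ := fun k => ∑ i, Complex.normSq (z k i) with hnsdef
  have hCz : ∀ k, star (z k) ⬝ᵥ (C *ᵥ z k) = ((a k : ℝ) : ℂ) := fun k => herm_dot_real hC (z k)
  have hC'z : ∀ k, star (z k) ⬝ᵥ (C' *ᵥ z k) = (((a k - μ * ns k : ℝ)) : ℂ) := by
    intro k
    rw [hC'def, Matrix.sub_mulVec, dotProduct_sub, Matrix.smul_mulVec,
      Matrix.one_mulVec, dotProduct_smul, dot_self, smul_eq_mul, hCz k]
    rw [show ((∑ i, Complex.normSq (z k i) : ℝ) : ℂ) = ((ns k : ℝ) : ℂ) from rfl]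
    rw [← Complex.ofReal_mul, ← Complex.ofReal_sub]
  have hTreal : ∑ k ∈ Pf, (star (z k) ⬝ᵥ (C' *ᵥ z k))
      = ((∑ k ∈ Pf, (a k - μ * ns k) : ℝ) : ℂ) := by
    rw [Complex.ofReal_sum]
    exact Finset.sum_congr rfl fun k _ => hC'z k
  have hR1 : 0 ≤ ∑ k ∈ Pf, (a k - μ * ns k) := by
    have h0 : (0:ℂ) ≤ ((∑ k ∈ Pf, (a k - μ * ns k) : ℝ) : ℂ) := by
      rw [← hTreal, hT]
      exact hcrux
    exact Complex.zero_le_real.mp h0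
  have hR2 : ∀ k, lmin * ns k ≤ a k := fun k => rayleigh hC F6 (z k)
  have hR3 : ∀ k, 0 ≤ ns k := fun k => Finset.sum_nonneg fun i _ => Complex.normSq_nonneg _
  -- per index inequality
  have hPk : ∀ k ∈ Pf, lr * a k + (l1 - lr) * η * ns k ≤ lam k * a k := by
    intro k hk
    have hkne : lam k ≠ 0 := by simpa [hPf] using (Finset.mem_filter.mp hk).2
    have h4 : lr ≤ lam k := F4 k hkne
    have h5 : lam k ≤ l1 := F2 k
    have h6 : η ≤ 0 := min_le_right _ _
    have h7 : η ≤ lmin := min_le_left _ _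
    have h8 : η * ns k ≤ a k := le_trans (mul_le_mul_of_nonneg_right h7 (hR3 k)) (hR2 k)
    have h9 : 0 ≤ (l1 - lr) * ns k := mul_nonneg (by linarith [F5]) (hR3 k)
    rcases le_or_gt 0 (a k) with hak | hak
    · nlinarith [mul_le_mul_of_nonneg_right h4 hak, mul_nonpos_iff.mpr (Or.inr ⟨h6, h9⟩)]
    · nlinarith [mul_le_mul_of_nonpos_right h5 (le_of_lt hak),
        mul_le_mul_of_nonneg_left h8 (sub_nonneg.mpr F5)]
  -- the bracket is nonnegative
  have hBR : 0 ≤ lr * μ + (l1 - lr) * η := by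
    have hκ : kappaEff hB.1 = l1 / lr := rfl
    rcases le_or_gt 0 lmin with hl | hl
    · have hη : η = 0 := min_eq_right hl
      rw [hη]
      have hμ0 : 0 ≤ μ := le_trans hl M4
      nlinarith [mul_nonneg (le_of_lt F3) hμ0]
    · have hη : η = lmin := min_eq_left (le_of_lt hl)
      rw [hη]
      have hmu2 : μ ≥ -(l1 / lr - 1) * lmin := by rw [← hκ]; exact hmu
      have hlr0 : lr ≠ 0 := ne_of_gt F3
      have h10 : lr * (-(l1 / lr - 1) * lmin) ≤ lr * μ :=
        mul_le_mul_of_nonneg_left hmu2 (le_of_lt F3)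
      have h11 : lr * (-(l1 / lr - 1) * lmin) = -((l1 - lr) * lmin) := by
        field_simp
      linarith
  -- spectral expansion of B entries
  have hBij : ∀ i j, B i j = ∑ k, U i k * ((lam k : ℝ) : ℂ) * conj (U j k) := by
    intro i j
    have hspec : B = U * Matrix.diagonal (RCLike.ofReal ∘ lam) * Uᴴ := by
      have := hB.1.spectral_theorem
      rwa [Unitary.conjStarAlgAut_apply, Matrix.star_eq_conjTranspose] at this
    conv_lhs => rw [hspec]
    rw [Matrix.mul_apply]
    refine Finset.sum_congr rfl fun k _ => ?_
    rw [Matrix.mul_diagonal]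
    simp [Matrix.conjTranspose_apply, RCLike.star_def, Function.comp]
  -- total expansion
  have hTotal : star x ⬝ᵥ ((C ⊙ B) *ᵥ x) = ((∑ k ∈ Pf, lam k * a k : ℝ) : ℂ) := by
    calc star x ⬝ᵥ ((C ⊙ B) *ᵥ x)
        = ∑ i, ∑ j, conj (x i) * ((C ⊙ B) i j) * x j := dot_expand _ _
      _ = ∑ i, ∑ j, ∑ k, (conj (x i) * C i j * x j) * (U i k * ((lam k : ℝ) : ℂ) * conj (U j k)) := by
          refine Finset.sum_congr rfl fun i _ => Finset.sum_congr rfl fun j _ => ?_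
          rw [Matrix.hadamard_apply, hBij i j]
          simp only [Finset.mul_sum, Finset.sum_mul]
          exact Finset.sum_congr rfl fun k _ => by ring
      _ = ∑ i, ∑ k, ∑ j, (conj (x i) * C i j * x j) * (U i k * ((lam k : ℝ) : ℂ) * conj (U j k)) :=
          Finset.sum_congr rfl fun i _ => Finset.sum_comm
      _ = ∑ k, ∑ i, ∑ j, (conj (x i) * C i j * x j) * (U i k * ((lam k : ℝ) : ℂ) * conj (U j k)) :=
          Finset.sum_comm
      _ = ∑ k, ((lam k : ℝ) : ℂ) * (star (z k) ⬝ᵥ (C *ᵥ z k)) := by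
          refine Finset.sum_congr rfl fun k _ => ?_
          rw [dot_expand, Finset.mul_sum]
          refine Finset.sum_congr rfl fun i _ => ?_
          rw [Finset.mul_sum]
          refine Finset.sum_congr rfl fun j _ => ?_
          simp only [hzdef, _root_.map_mul, Complex.conj_conj]
          ring
      _ = ∑ k ∈ Pf, ((lam k : ℝ) : ℂ) * (star (z k) ⬝ᵥ (C *ᵥ z k)) := by
          rw [← Finset.sum_filter_add_sum_filter_not univ (fun k => lam k = 0)
            (fun k => ((lam k : ℝ) : ℂ) * (star (z k) ⬝ᵥ (C *ᵥ z k)))]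
          have hzero : ∑ k ∈ univ.filter (fun k => lam k = 0),
              ((lam k : ℝ) : ℂ) * (star (z k) ⬝ᵥ (C *ᵥ z k)) = 0 := by
            refine Finset.sum_eq_zero fun k hk => ?_
            have : lam k = 0 := by simpa using (Finset.mem_filter.mp hk).2
            rw [this]
            simp
          rw [hzero, zero_add]
      _ = ((∑ k ∈ Pf, lam k * a k : ℝ) : ℂ) := by
          rw [Complex.ofReal_sum]
          refine Finset.sum_congr rfl fun k _ => ?_
          rw [hCz k, ← Complex.ofReal_mul]
  rw [hTotal]
  refine Complex.zero_le_real.mpr ?_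
  -- final real chain
  have hsum1 : ∑ k ∈ Pf, (lr * a k + (l1 - lr) * η * ns k) ≤ ∑ k ∈ Pf, lam k * a k :=
    Finset.sum_le_sum hPk
  have hsplit1 : ∑ k ∈ Pf, (lr * a k + (l1 - lr) * η * ns k)
      = lr * (∑ k ∈ Pf, a k) + (l1 - lr) * η * (∑ k ∈ Pf, ns k) := by
    rw [Finset.sum_add_distrib, ← Finset.mul_sum, ← Finset.mul_sum]
  have hsplit2 : ∑ k ∈ Pf, (a k - μ * ns k)
      = (∑ k ∈ Pf, a k) - μ * (∑ k ∈ Pf, ns k) := by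
    rw [Finset.sum_sub_distrib, ← Finset.mul_sum]
  have hnssum : 0 ≤ ∑ k ∈ Pf, ns k := Finset.sum_nonneg fun k _ => hR3 k
  have p1 : 0 ≤ lr * ((∑ k ∈ Pf, a k) - μ * (∑ k ∈ Pf, ns k)) :=
    mul_nonneg (le_of_lt F3) (hsplit2 ▸ hR1)
  have p2 : 0 ≤ (lr * μ + (l1 - lr) * η) * (∑ k ∈ Pf, ns k) := mul_nonneg hBR hnssum
  nlinarith [hsum1, hsplit1, p1, p2]
end
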